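/- arXiv:2602.19425 — 9 statements merged into one kernel-verified Lean document; each statement's English description precedes it below -/
import Mathlib

section
/- Let p ∈ ℤ and q ≥ 1 be coprime integers, let r ≥ 1 be an integer and ε ∈ {+1,-1} a sign such that 0 ≤ ε(qx - p) < 1/r for a real number x. If I is an interval of q consecutive integers such that εI is contained entirely in {-r, ..., -1} or entirely in {0, ..., r}, then the map j ↦ ⌊q{jx}⌋ restricted to I is a bijection onto {0, 1, ..., q-1}. -/
lemma aux_floor (q : ℤ) (hq : 1 ≤ q) (n : ℤ) (t : ℝ) (ht0 : 0 ≤ t) (ht1 : t < 1) :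
    ⌊(q : ℝ) * Int.fract (((n : ℝ) + t) / (q : ℝ))⌋ = n % q := by
  have hq0 : (0 : ℝ) < (q : ℝ) := by exact_mod_cast (by omega : (0:ℤ) < q)
  have hm0 : 0 ≤ n % q := Int.emod_nonneg n (by omega)
  have hm1 : n % q < q := Int.emod_lt_of_pos n (by omega)
  have h := Int.mul_ediv_add_emod n q
  have h' : (n : ℝ) = (q : ℝ) * ((n / q : ℤ) : ℝ) + ((n % q : ℤ) : ℝ) := by
    exact_mod_cast h.symm
  have key : ((n : ℝ) + t) / q = ((n / q : ℤ) : ℝ) + (((n % q : ℤ) : ℝ) + t) / q := by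
    rw [h']; field_simp; ring
  have hfr : Int.fract ((((n % q : ℤ) : ℝ) + t) / q) = (((n % q : ℤ) : ℝ) + t) / q := by
    apply Int.fract_eq_self.2
    constructor
    · positivity
    · rw [div_lt_one hq0]
      have : ((n % q : ℤ) : ℝ) ≤ (q : ℝ) - 1 := by exact_mod_cast (by omega : n % q ≤ q - 1)
      linarith
  rw [key, Int.fract_intCast_add, hfr, mul_div_cancel₀ _ (ne_of_gt hq0), Int.floor_intCast_add,
    Int.floor_eq_zero_iff.2 ⟨ht0, ht1⟩, add_zero]

lemma aux_bij (p q : ℤ) (hq : 1 ≤ q) (hpq : IsCoprime p q) (c k : ℤ) :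
    Set.BijOn (fun j : ℤ => (j * p - c) % q) (Set.Icc k (k + q - 1)) (Set.Icc 0 (q - 1)) := by
  have hq0 : q ≠ 0 := by omega
  refine ⟨?_, ?_, ?_⟩
  · intro j _
    have := Int.emod_nonneg (j * p - c) hq0
    have := Int.emod_lt_of_pos (j * p - c) (by omega : 0 < q)
    simp only [Set.mem_Icc]; omega
  · intro j1 h1 j2 h2 he
    simp only [Set.mem_Icc] at h1 h2
    have hd : q ∣ (j1 * p - c) - (j2 * p - c) := Int.ModEq.dvd (Int.ModEq.symm he)
    have hd' : q ∣ (j1 - j2) * p := by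
      have : (j1 - j2) * p = (j1 * p - c) - (j2 * p - c) := by ring
      rwa [this]
    have hd2 : q ∣ j1 - j2 := (hpq.symm).dvd_of_dvd_mul_right hd'
    have := Int.eq_zero_of_abs_lt_dvd hd2 (by rw [abs_lt]; omega)
    omega
  · intro m hm
    simp only [Set.mem_Icc] at hm
    obtain ⟨u, v, huv⟩ := hpq
    set j0 := u * (m + c) with hj0
    refine ⟨k + (j0 - k) % q, ?_, ?_⟩
    · have := Int.emod_nonneg (j0 - k) hq0
      have := Int.emod_lt_of_pos (j0 - k) (by omega : 0 < q)
      simp only [Set.mem_Icc]; omega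
    · have h1 : q ∣ (k + (j0 - k) % q) - j0 := by
        have := Int.mul_ediv_add_emod (j0 - k) q
        exact ⟨-((j0 - k) / q), by linear_combination this⟩
      have h2 : q ∣ j0 * p - c - m := ⟨(m + c) * (-v), by
        have : j0 * p - c - m = (m + c) * (u * p + v * q) - (m + c) + q * ((m + c) * (-v)) := by
          ring
        rw [this, huv]; ring⟩
      have h3 : q ∣ ((k + (j0 - k) % q) * p - c) - m := by
        obtain ⟨a, ha⟩ := h1; obtain ⟨b, hb⟩ := h2
        exact ⟨a * p + b, by linear_combination p * ha + hb⟩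
      have hmm : ((k + (j0 - k) % q) * p - c) % q = m % q := Int.ModEq.symm (Int.modEq_iff_dvd.2 h3)
      show ((k + (j0 - k) % q) * p - c) % q = m
      rw [hmm, Int.emod_eq_of_lt hm.1 (by omega)]

/-- Equidistribution of irrational orbits: if `p, q` are coprime with `q ≥ 1`, `r ≥ 1`,
`ε = ±1` and `0 ≤ ε(qx - p) < 1/r`, then for any interval `I` of `q` consecutive integers
with `εI ⊆ {-r, ..., -1}` or `εI ⊆ {0, ..., r}`, the map `j ↦ ⌊q {j x}⌋` restricted to `I`
is a bijection onto `{0, 1, ..., q-1}`. -/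
theorem stmt3 (x : ℝ) (p q : ℤ) (hq : 1 ≤ q) (hpq : IsCoprime p q)
    (r : ℤ) (hr : 1 ≤ r) (ε : ℤ) (hε : ε = 1 ∨ ε = -1)
    (hx0 : 0 ≤ (ε : ℝ) * ((q : ℝ) * x - (p : ℝ)))
    (hx1 : (ε : ℝ) * ((q : ℝ) * x - (p : ℝ)) < 1 / (r : ℝ))
    (k : ℤ)
    (hI : (∀ j ∈ Set.Icc k (k + q - 1), ε * j ∈ Set.Icc (-r) (-1)) ∨
          (∀ j ∈ Set.Icc k (k + q - 1), ε * j ∈ Set.Icc 0 r)) :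
    Set.BijOn (fun j : ℤ => ⌊(q : ℝ) * Int.fract ((j : ℝ) * x)⌋)
      (Set.Icc k (k + q - 1)) (Set.Icc 0 (q - 1)) := by
  have hq0 : (0 : ℝ) < (q : ℝ) := by exact_mod_cast (by omega : (0:ℤ) < q)
  have hr0 : (0 : ℝ) < (r : ℝ) := by exact_mod_cast (by omega : (0:ℤ) < r)
  set δ : ℝ := (ε : ℝ) * ((q : ℝ) * x - (p : ℝ)) with hδ
  have hεsq : (ε : ℝ) * (ε : ℝ) = 1 := by rcases hε with h | h <;> subst h <;> norm_num
  have hqx : (q : ℝ) * x = (p : ℝ) + (ε : ℝ) * δ := by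
    rw [hδ]; linear_combination ((p : ℝ) - (q : ℝ) * x) * hεsq
  -- jx = (jp + (εj) δ)/q
  have hjx : ∀ j : ℤ, (j : ℝ) * x = (((j * p : ℤ) : ℝ) + ((ε * j : ℤ) : ℝ) * δ) / q := by
    intro j
    rw [eq_div_iff (ne_of_gt hq0)]
    push_cast
    linear_combination ((j : ℝ) * (p : ℝ) - (j : ℝ) * x * (q : ℝ)) * hεsq
  by_cases hδ0 : δ = 0
  · refine (aux_bij p q hq hpq 0 k).congr ?_
    intro j _
    simp only
    rw [hjx j, hδ0, mul_zero, add_zero, sub_zero]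
    have h0 := aux_floor q hq (j * p) 0 le_rfl one_pos
    rw [add_zero] at h0
    exact h0.symm
  · have hδpos : 0 < δ := lt_of_le_of_ne hx0 (Ne.symm hδ0)
    rcases hI with hB | hA
    · refine (aux_bij p q hq hpq 1 k).congr ?_
      intro j hj
      simp only
      obtain ⟨hb1, hb2⟩ := Set.mem_Icc.1 (hB j hj)
      set t : ℝ := ((ε * j : ℤ) : ℝ) * δ with ht
      have hmr : ((ε * j : ℤ) : ℝ) ≥ (-r : ℤ) := by exact_mod_cast hb1
      have hm1 : ((ε * j : ℤ) : ℝ) ≤ -1 := by exact_mod_cast hb2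
      have ht1 : t ≤ -δ := by nlinarith
      have hrδ : (r : ℝ) * δ < 1 := by
        calc (r : ℝ) * δ < (r : ℝ) * (1 / r) := mul_lt_mul_of_pos_left hx1 hr0
          _ = 1 := by field_simp
      have hmr' : -(r : ℝ) ≤ ((ε * j : ℤ) : ℝ) := by exact_mod_cast hb1
      have ht0 : -1 < t := by
        nlinarith [mul_nonneg (by linarith : (0:ℝ) ≤ ((ε * j : ℤ) : ℝ) + r) hδpos.le]
      rw [hjx j, ← ht]
      have heq : (((j * p : ℤ) : ℝ) + t) = (((j * p - 1 : ℤ) : ℝ) + (1 + t)) := by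
        push_cast; ring
      rw [heq]
      exact (aux_floor q hq (j * p - 1) (1 + t) (by linarith) (by linarith)).symm
    · refine (aux_bij p q hq hpq 0 k).congr ?_
      intro j hj
      simp only
      obtain ⟨hb1, hb2⟩ := Set.mem_Icc.1 (hA j hj)
      set t : ℝ := ((ε * j : ℤ) : ℝ) * δ with ht
      have hm0 : (0:ℝ) ≤ ((ε * j : ℤ) : ℝ) := by exact_mod_cast hb1
      have hmr : ((ε * j : ℤ) : ℝ) ≤ (r : ℝ) := by exact_mod_cast hb2
      have ht0 : 0 ≤ t := mul_nonneg hm0 (le_of_lt hδpos)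
      have ht1 : t < 1 := by
        have hrδ : (r : ℝ) * δ < 1 := by
          calc (r : ℝ) * δ < (r : ℝ) * (1 / r) := mul_lt_mul_of_pos_left hx1 hr0
            _ = 1 := by field_simp
        nlinarith
      rw [hjx j, ← ht, sub_zero]
      exact (aux_floor q hq (j * p) t ht0 ht1).symm
end

section
/- Let p ∈ ℤ and q ≥ 1 be coprime, r ≥ 1 an integer, ε = ±1 a sign, and x real with 0 < ε(qx - p) < 1/r. Then for every integer j with εj ∈ {1, ..., r}, one has ⌊q{jx}⌋ ≡ pj (mod q), and for every integer j with εj ∈ {-r, ..., -1}, one has ⌊q{jx}⌋ ≡ pj - 1 (mod q). -/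
/-- If `p, q` are coprime with `q ≥ 1`, `r ≥ 1`, `ε = ±1` and `0 < ε(qx - p) < 1/r`, then
for `εj ∈ {1, ..., r}` one has `⌊q {j x}⌋ ≡ p j (mod q)`, and for `εj ∈ {-r, ..., -1}` one
has `⌊q {j x}⌋ ≡ p j - 1 (mod q)`. -/
theorem stmt4 (x : ℝ) (p q : ℤ) (hq : 1 ≤ q) (hpq : IsCoprime p q)
    (r : ℤ) (hr : 1 ≤ r) (ε : ℤ) (hε : ε = 1 ∨ ε = -1)
    (hx0 : 0 < (ε : ℝ) * ((q : ℝ) * x - (p : ℝ)))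
    (hx1 : (ε : ℝ) * ((q : ℝ) * x - (p : ℝ)) < 1 / (r : ℝ)) :
    (∀ j : ℤ, ε * j ∈ Set.Icc 1 r →
      ⌊(q : ℝ) * Int.fract ((j : ℝ) * x)⌋ ≡ p * j [ZMOD q]) ∧
    (∀ j : ℤ, ε * j ∈ Set.Icc (-r) (-1) →
      ⌊(q : ℝ) * Int.fract ((j : ℝ) * x)⌋ ≡ p * j - 1 [ZMOD q]) := by
  set δ : ℝ := (q : ℝ) * x - (p : ℝ) with hδ
  have hrR : (0:ℝ) < (r:ℝ) := by exact_mod_cast lt_of_lt_of_le zero_lt_one hr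
  have hr1 : (r:ℝ) * (1 / (r:ℝ)) = 1 := by field_simp
  have key : ∀ j : ℤ, ⌊(q : ℝ) * Int.fract ((j : ℝ) * x)⌋
      = p * j - q * ⌊(j : ℝ) * x⌋ + ⌊(j : ℝ) * δ⌋ := by
    intro j
    have h1 : (q : ℝ) * Int.fract ((j : ℝ) * x)
        = ((p * j - q * ⌊(j : ℝ) * x⌋ : ℤ) : ℝ) + (j : ℝ) * δ := by
      rw [Int.fract, hδ]; push_cast; ring
    rw [h1, Int.floor_intCast_add]
  have hεδ : ∀ j : ℤ, (j:ℝ) * δ = ((ε*j : ℤ):ℝ) * ((ε:ℝ) * δ) := by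
    intro j
    rcases hε with h | h <;> subst h <;> push_cast <;> ring
  have hB : (r:ℝ) * ((ε:ℝ) * δ) < 1 := (mul_lt_mul_of_pos_left hx1 hrR).trans_eq hr1
  constructor
  · rintro j ⟨hj1, hj2⟩
    have hj1R : (1:ℝ) ≤ ((ε*j:ℤ):ℝ) := by exact_mod_cast hj1
    have hj2R : ((ε*j:ℤ):ℝ) ≤ (r:ℝ) := by exact_mod_cast hj2
    have hA : ((ε*j:ℤ):ℝ) * ((ε:ℝ) * δ) ≤ (r:ℝ) * ((ε:ℝ) * δ) :=
      mul_le_mul_of_nonneg_right hj2R hx0.le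
    have hb : ⌊(j:ℝ) * δ⌋ = 0 := by
      rw [Int.floor_eq_zero_iff, hεδ j]
      refine ⟨(mul_pos (lt_of_lt_of_le zero_lt_one hj1R) hx0).le, by linarith⟩
    rw [key j, hb]
    exact Int.modEq_iff_dvd.mpr ⟨⌊(j:ℝ) * x⌋, by ring⟩
  · rintro j ⟨hj1, hj2⟩
    have hj1R : (-(r:ℝ)) ≤ ((ε*j:ℤ):ℝ) := by exact_mod_cast hj1
    have hj2R : ((ε*j:ℤ):ℝ) ≤ (-1:ℝ) := by exact_mod_cast hj2
    have hA : (-(r:ℝ)) * ((ε:ℝ) * δ) ≤ ((ε*j:ℤ):ℝ) * ((ε:ℝ) * δ) :=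
      mul_le_mul_of_nonneg_right hj1R hx0.le
    have hC : ((ε*j:ℤ):ℝ) * ((ε:ℝ) * δ) < 0 :=
      mul_neg_of_neg_of_pos (lt_of_le_of_lt hj2R (by norm_num)) hx0
    have hb : ⌊(j:ℝ) * δ⌋ = -1 := by
      push_cast at hA hC
      rw [Int.floor_eq_iff, hεδ j]
      constructor
      · push_cast; nlinarith
      · push_cast; nlinarith
    rw [key j, hb]
    exact Int.modEq_iff_dvd.mpr ⟨⌊(j:ℝ) * x⌋, by ring⟩
end

section
/- For an irrational real number x, the following two quantities are equal: limsup over n → ∞ of (log q_{n+1})/q_n, where p_n/q_n are the continued fraction convergents of x, and limsup over integers q → ∞ of log(1/dist(qx,ℤ))/q. -/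
open Filter
open scoped ENNReal

/-- Distance from a real number to the nearest integer. -/
noncomputable def distZ (y : ℝ) : ℝ := |y - round y|

/-- Iterates of the Gauss map. -/
noncomputable def cfX (x : ℝ) : ℕ → ℝ
  | 0 => x
  | n + 1 => (Int.fract (cfX x n))⁻¹

/-- Denominators of convergents, shifted by 2: `convQ x (n+2) = q_n`. -/
noncomputable def convQ (x : ℝ) : ℕ → ℤ
  | 0 => 1
  | 1 => 0
  | n + 2 => ⌊cfX x n⌋ * convQ x (n + 1) + convQ x n

/-- The exponential type of `x`: `limsup_{q→∞} log(1/dist(qx,ℤ))/q`, valued in `[0,∞]`. -/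
noncomputable def Bsup (x : ℝ) : ℝ≥0∞ :=
  Filter.limsup (fun q : ℕ => ENNReal.ofReal (Real.log (distZ ((q : ℝ) * x))⁻¹ / (q : ℝ)))
    Filter.atTop

noncomputable def convP (x : ℝ) : ℕ → ℤ
  | 0 => 0
  | 1 => 1
  | n + 2 => ⌊cfX x n⌋ * convP x (n + 1) + convP x n

lemma cfX_irrational {x : ℝ} (hx : Irrational x) : ∀ n, Irrational (cfX x n)
  | 0 => hx
  | n + 1 => by
    have h := cfX_irrational hx n
    have h2 : Irrational (Int.fract (cfX x n)) := by
      rw [Int.fract]; exact h.sub_intCast ⌊cfX x n⌋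
    exact h2.inv

lemma fract_cfX_pos {x : ℝ} (hx : Irrational x) (n : ℕ) : 0 < Int.fract (cfX x n) := by
  rcases lt_or_eq_of_le (Int.fract_nonneg (cfX x n)) with h' | h'
  · exact h'
  · exfalso
    have h2 : Irrational (Int.fract (cfX x n)) := by
      rw [Int.fract]; exact (cfX_irrational hx n).sub_intCast ⌊cfX x n⌋
    exact h2.ne_int 0 (by simp [← h'])

lemma cfX_gt_one {x : ℝ} (hx : Irrational x) (n : ℕ) : 1 < cfX x (n + 1) := by
  have h0 := fract_cfX_pos hx n
  have h1 : Int.fract (cfX x n) < 1 := Int.fract_lt_one _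
  have : (1:ℝ) < (Int.fract (cfX x n))⁻¹ := one_lt_inv₀ h0 |>.2 h1
  simpa [cfX] using this

lemma floor_cfX_pos {x : ℝ} (hx : Irrational x) (n : ℕ) : 1 ≤ ⌊cfX x (n + 1)⌋ :=
  Int.le_floor.2 (by exact_mod_cast (cfX_gt_one hx n).le)

lemma convQ_nonneg {x : ℝ} (hx : Irrational x) : ∀ n, 0 ≤ convQ x n
  | 0 => by simp [convQ]
  | 1 => by simp [convQ]
  | 2 => by simp [convQ]
  | (n + 3) => by
    have h1 := convQ_nonneg hx (n + 1)
    have h2 := convQ_nonneg hx (n + 2)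
    have h3 := floor_cfX_pos hx n
    show 0 ≤ ⌊cfX x (n+1)⌋ * convQ x (n + 2) + convQ x (n + 1)
    positivity

lemma convQ_main {x : ℝ} (hx : Irrational x) :
    ∀ n : ℕ, 1 ≤ convQ x (n + 2) ∧ convQ x (n + 2) ≤ convQ x (n + 3) ∧ (n : ℤ) ≤ convQ x (n + 2)
  | 0 => by
    refine ⟨by simp [convQ], ?_, by simp [convQ]⟩
    show convQ x 2 ≤ ⌊cfX x 1⌋ * convQ x 2 + convQ x 1
    have h3 := floor_cfX_pos hx 0
    have : convQ x 2 = 1 := by simp [convQ]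
    simp [convQ] at *
    omega
  | (n + 1) => by
    obtain ⟨ih1, ih2, ih3⟩ := convQ_main hx n
    have ha1 : 1 ≤ ⌊cfX x (n+1)⌋ := floor_cfX_pos hx n
    have ha2 : 1 ≤ ⌊cfX x (n+2)⌋ := floor_cfX_pos hx (n+1)
    have hq1 : 0 ≤ convQ x (n + 1) := convQ_nonneg hx (n+1)
    have e3 : convQ x (n + 3) = ⌊cfX x (n+1)⌋ * convQ x (n + 2) + convQ x (n + 1) := rfl
    have e4 : convQ x (n + 4) = ⌊cfX x (n+2)⌋ * convQ x (n + 3) + convQ x (n + 2) := rfl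
    have h13 : 1 ≤ convQ x (n + 3) := by nlinarith
    refine ⟨h13, by nlinarith, ?_⟩
    -- (n+1 : ℤ) ≤ convQ x (n+3)
    rcases Nat.eq_zero_or_pos n with rfl | hn
    · simpa using h13
    · have hq1' : 1 ≤ convQ x (n + 1) := by
        obtain ⟨h, _, _⟩ := convQ_main hx (n - 1)
        have : n - 1 + 2 = n + 1 := by omega
        rwa [this] at h
      push_cast
      nlinarith

lemma convQ_pos {x : ℝ} (hx : Irrational x) (n : ℕ) : 1 ≤ convQ x (n + 2) :=
  (convQ_main hx n).1

lemma convQ_mono {x : ℝ} (hx : Irrational x) (n : ℕ) : convQ x (n + 2) ≤ convQ x (n + 3) :=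
  (convQ_main hx n).2.1

lemma convQ_ge {x : ℝ} (hx : Irrational x) (n : ℕ) : (n : ℤ) ≤ convQ x (n + 2) :=
  (convQ_main hx n).2.2

lemma convQ_fib {x : ℝ} (hx : Irrational x) (n : ℕ) :
    convQ x (n + 2) + convQ x (n + 3) ≤ convQ x (n + 4) := by
  have e4 : convQ x (n + 4) = ⌊cfX x (n+2)⌋ * convQ x (n + 3) + convQ x (n + 2) := rfl
  have ha2 : 1 ≤ ⌊cfX x (n+2)⌋ := floor_cfX_pos hx (n+1)
  have h13 : 1 ≤ convQ x (n + 3) := convQ_pos hx (n+1)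
  nlinarith

lemma cfX_eq {x : ℝ} (hx : Irrational x) (n : ℕ) :
    cfX x n = ⌊cfX x n⌋ + (cfX x (n + 1))⁻¹ := by
  have h0 := fract_cfX_pos hx n
  have : cfX x (n + 1) = (Int.fract (cfX x n))⁻¹ := rfl
  rw [this, inv_inv, Int.fract]
  ring

lemma cfX_pos {x : ℝ} (hx : Irrational x) (n : ℕ) : 0 < cfX x (n + 1) :=
  lt_trans one_pos (cfX_gt_one hx n)

lemma conv_identity {x : ℝ} (hx : Irrational x) :
    ∀ n : ℕ, x * ((convQ x (n + 1) : ℝ) * cfX x n + (convQ x n : ℝ)) =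
      (convP x (n + 1) : ℝ) * cfX x n + (convP x n : ℝ)
  | 0 => by simp [convQ, convP, cfX]
  | (n + 1) => by
    have ih := conv_identity hx n
    have ht : cfX x n = ⌊cfX x n⌋ + (cfX x (n + 1))⁻¹ := cfX_eq hx n
    have htpos : cfX x (n + 1) ≠ 0 := by
      rcases Nat.eq_zero_or_pos n with rfl | hn
      · exact ne_of_gt (cfX_pos hx 0)
      · exact ne_of_gt (cfX_pos hx n)
    have eQ : (convQ x (n + 2) : ℝ) = ⌊cfX x n⌋ * convQ x (n + 1) + convQ x n := by
      push_cast [convQ]; ring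
    have eP : (convP x (n + 2) : ℝ) = ⌊cfX x n⌋ * convP x (n + 1) + convP x n := by
      push_cast [convP]; ring
    rw [ht] at ih
    rw [eQ, eP]
    field_simp at ih ⊢
    nlinarith [ih]

lemma conv_det {x : ℝ} :
    ∀ n : ℕ, convP x (n + 1) * convQ x n - convP x n * convQ x (n + 1) = (-1) ^ n
  | 0 => by simp [convQ, convP]
  | (n + 1) => by
    have ih := conv_det (x := x) n
    have eQ : convQ x (n + 2) = ⌊cfX x n⌋ * convQ x (n + 1) + convQ x n := rfl
    have eP : convP x (n + 2) = ⌊cfX x n⌋ * convP x (n + 1) + convP x n := rfl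
    rw [eQ, eP, pow_succ]
    nlinarith [ih]

lemma conv_err {x : ℝ} (hx : Irrational x) (n : ℕ) :
    ((convQ x n : ℝ) * x - convP x n) * ((convQ x (n + 1) : ℝ) * cfX x n + (convQ x n : ℝ)) =
      (-1) ^ n * cfX x n := by
  have h1 := conv_identity hx n
  have h2 := conv_det (x := x) n
  have h2' : ((convP x (n + 1) : ℝ) * convQ x n - convP x n * convQ x (n + 1)) = (-1) ^ n := by
    exact_mod_cast congrArg (fun z : ℤ => (z : ℝ)) h2
  linear_combination (convQ x n : ℝ) * h1 + cfX x n * h2'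

/-- error bound: `|q_n x - p_n| ≤ 1 / q_{n+1}` (shifted indices, for n ≥ 2). -/
lemma err_le {x : ℝ} (hx : Irrational x) (n : ℕ) :
    |(convQ x (n + 2) : ℝ) * x - convP x (n + 2)| ≤ ((convQ x (n + 3) : ℝ))⁻¹ := by
  set t := cfX x (n + 2) with hts
  have ht : 1 < t := cfX_gt_one hx (n + 1)
  have hQ1 : (1:ℝ) ≤ (convQ x (n + 2) : ℝ) := by exact_mod_cast convQ_pos hx n
  have hQ2 : (1:ℝ) ≤ (convQ x (n + 3) : ℝ) := by exact_mod_cast convQ_pos hx (n + 1)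
  have he := conv_err hx (n + 2)
  set D := (convQ x (n + 3) : ℝ) * t + (convQ x (n + 2) : ℝ) with hD
  have hDge : (convQ x (n + 3) : ℝ) * t ≤ D := by rw [hD]; linarith
  have hDpos : 0 < D := by nlinarith
  have habs : |(convQ x (n + 2) : ℝ) * x - convP x (n + 2)| = t / D := by
    have : ((convQ x (n + 2) : ℝ) * x - convP x (n + 2)) = (-1) ^ (n + 2) * t / D := by
      field_simp
      linarith [he]
    rw [this, abs_div, abs_of_pos hDpos]
    rcases Nat.even_or_odd (n + 2) with h | h
    · rw [h.neg_one_pow]; rw [abs_of_pos (by linarith : (0:ℝ) < 1 * t)]; ring_nf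
    · rw [Odd.neg_one_pow h]; rw [abs_of_neg (by nlinarith : (-1 : ℝ) * t < 0)]; ring_nf
  rw [habs]
  rw [div_le_iff₀ hDpos]
  have h3 : (0:ℝ) < (convQ x (n + 3) : ℝ) := by linarith
  rw [inv_mul_eq_div, le_div_iff₀ h3]
  nlinarith

/-- coprimality of p_n, q_n -/
lemma conv_coprime {x : ℝ} (n : ℕ) : IsCoprime (convP x (n + 1)) (convQ x (n + 1)) := by
  rcases Nat.even_or_odd n with h | h
  · exact ⟨convQ x n, -convP x n, by have := conv_det (x := x) n; rw [h.neg_one_pow] at this; linear_combination this⟩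
  · exact ⟨-convQ x n, convP x n, by have := conv_det (x := x) n; rw [Odd.neg_one_pow h] at this; linear_combination -this⟩

/-- Key lower bound: for `1 ≤ q < q_k`, any integer `p`:
`|q x - p| ≥ (1 - q/q_{k+1}) / q_k` (shifted indices `k+2`, `k+3`). -/
lemma key_lower {x : ℝ} (hx : Irrational x) (k : ℕ) (q : ℕ) (hq1 : 1 ≤ q)
    (hqk : (q : ℤ) < convQ x (k + 2)) (p : ℤ) :
    (1 - (q : ℝ) / (convQ x (k + 3) : ℝ)) / (convQ x (k + 2) : ℝ) ≤ |(q : ℝ) * x - p| := by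
  set Q : ℤ := convQ x (k + 2) with hQdef
  set P : ℤ := convP x (k + 2) with hPdef
  have hQpos : (1:ℤ) ≤ Q := convQ_pos hx k
  have hQ3pos : (1:ℤ) ≤ convQ x (k + 3) := convQ_pos hx (k + 1)
  have hD : (q : ℤ) * P - p * Q ≠ 0 := by
    intro h0
    have hco : IsCoprime P Q := conv_coprime (x := x) (k + 1)
    have hdvd : Q ∣ (q : ℤ) * P := ⟨p, by linarith [h0]⟩
    have : Q ∣ (q : ℤ) := hco.symm.dvd_of_dvd_mul_right hdvd
    have := Int.le_of_dvd (by exact_mod_cast hq1) this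
    omega
  have hDabs : (1:ℝ) ≤ |((q : ℤ) * P - p * Q : ℤ)| := by exact_mod_cast Int.one_le_abs hD
  have hDabs' : (1:ℝ) ≤ |(q : ℝ) * P - p * Q| := by push_cast at hDabs ⊢; exact hDabs
  have herr := err_le hx k
  have hQR : (0:ℝ) < (Q : ℝ) := by exact_mod_cast lt_of_lt_of_le one_pos hQpos
  have hQ3R : (0:ℝ) < (convQ x (k + 3) : ℝ) := by exact_mod_cast lt_of_lt_of_le one_pos hQ3pos
  -- decomposition: q x - p = (q (Q x - P) + (q P - p Q)) / Q
  have hdecomp : (q : ℝ) * x - p = ((q : ℝ) * ((Q : ℝ) * x - P) + ((q : ℝ) * P - p * Q)) / Q := by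
    field_simp
    ring
  have htri : |(q : ℝ) * P - p * Q| - (q : ℝ) * |(Q : ℝ) * x - P| ≤
      |(q : ℝ) * ((Q : ℝ) * x - P) + ((q : ℝ) * P - p * Q)| := by
    have h1 : |(q : ℝ) * P - p * Q| ≤
        |(q : ℝ) * ((Q : ℝ) * x - P) + ((q : ℝ) * P - p * Q)| + |(q : ℝ) * ((Q : ℝ) * x - P)| := by
      calc |(q : ℝ) * P - p * Q|
          = |((q : ℝ) * ((Q : ℝ) * x - P) + ((q : ℝ) * P - p * Q)) - (q : ℝ) * ((Q : ℝ) * x - P)| := by ring_nf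
        _ ≤ _ := abs_sub _ _
    have h2 : |(q : ℝ) * ((Q : ℝ) * x - P)| = (q : ℝ) * |(Q : ℝ) * x - P| := by
      rw [abs_mul, abs_of_nonneg (by positivity : (0:ℝ) ≤ (q:ℝ))]
    linarith
  have hqQ3 : (q : ℝ) < (convQ x (k + 3) : ℝ) := by
    have : (q : ℤ) < convQ x (k + 3) := lt_of_lt_of_le hqk (convQ_mono hx k)
    exact_mod_cast this
  have herr' : (q : ℝ) * |(Q : ℝ) * x - P| ≤ (q : ℝ) / (convQ x (k + 3) : ℝ) := by
    rw [div_eq_mul_inv]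
    exact mul_le_mul_of_nonneg_left herr (by positivity)
  have hnum : 1 - (q : ℝ) / (convQ x (k + 3) : ℝ) ≤
      |(q : ℝ) * ((Q : ℝ) * x - P) + ((q : ℝ) * P - p * Q)| := by linarith
  rw [hdecomp, abs_div, abs_of_pos hQR]
  gcongr

lemma distZ_le (y : ℝ) (p : ℤ) : distZ y ≤ |y - p| := by
  rcases eq_or_ne p (round y) with rfl | hp
  · exact le_refl _
  · have h1 : (1:ℝ) ≤ |(p : ℝ) - (round y : ℝ)| := by
      have : (1:ℤ) ≤ |p - round y| := Int.one_le_abs (sub_ne_zero.2 hp)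
      calc (1:ℝ) = ((1:ℤ):ℝ) := by norm_num
        _ ≤ (|p - round y| : ℤ) := by exact_mod_cast this
        _ = |(p : ℝ) - (round y : ℝ)| := by push_cast; ring_nf
    have h2 : |y - round y| ≤ 1 / 2 := abs_sub_round y
    have h3 : |(p : ℝ) - (round y : ℝ)| ≤ |(p:ℝ) - y| + |y - round y| := by
      calc |(p : ℝ) - (round y : ℝ)| = |((p:ℝ) - y) + (y - round y)| := by ring_nf
        _ ≤ |(p:ℝ) - y| + |y - round y| := abs_add_le _ _
    have h4 : |(p:ℝ) - y| = |y - p| := abs_sub_comm _ _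
    unfold distZ
    linarith

lemma distZ_pos {x : ℝ} (hx : Irrational x) {q : ℕ} (hq : 1 ≤ q) : 0 < distZ ((q:ℝ) * x) := by
  have hirr : Irrational ((q:ℝ) * x) := by
    have : ((q:ℤ):ℝ) = (q:ℝ) := by push_cast; rfl
    rw [← this]
    exact hx.intCast_mul (by exact_mod_cast Nat.pos_of_ne_zero (by omega) |>.ne')
  have : (q:ℝ) * x - round ((q:ℝ)*x) ≠ 0 := sub_ne_zero.2 (hirr.ne_int _)
  exact abs_pos.2 this

/-- The "≤" direction: limsup over n bounded by limsup over all q. -/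
lemma dir_le {x : ℝ} (hx : Irrational x) :
    Filter.limsup
      (fun n : ℕ => ENNReal.ofReal (Real.log (convQ x (n + 3) : ℝ) / (convQ x (n + 2) : ℝ)))
      Filter.atTop ≤
    Filter.limsup (fun q : ℕ => ENNReal.ofReal (Real.log (distZ ((q : ℝ) * x))⁻¹ / (q : ℝ)))
      Filter.atTop := by
  set F : ℕ → ℝ≥0∞ := fun q : ℕ => ENNReal.ofReal (Real.log (distZ ((q : ℝ) * x))⁻¹ / (q : ℝ))
    with hF
  set σ : ℕ → ℕ := fun n => (convQ x (n + 2)).toNat with hσdef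
  have hσcast : ∀ n, ((σ n : ℕ) : ℝ) = ((convQ x (n + 2) : ℤ) : ℝ) := by
    intro n
    have h0 := convQ_nonneg hx (n + 2)
    have h2 : ((convQ x (n+2)).toNat : ℤ) = convQ x (n+2) := Int.toNat_of_nonneg h0
    simp only [hσdef]
    exact_mod_cast congrArg (fun z : ℤ => (z : ℝ)) h2
  have hσ1 : ∀ n, 1 ≤ σ n := by
    intro n
    have := convQ_pos hx n
    simp [hσdef]; omega
  have hpoint : ∀ n : ℕ,
      ENNReal.ofReal (Real.log (convQ x (n + 3) : ℝ) / (convQ x (n + 2) : ℝ)) ≤ F (σ n) := by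
    intro n
    have hQ2 : (1:ℝ) ≤ ((convQ x (n + 2) : ℤ) : ℝ) := by exact_mod_cast convQ_pos hx n
    have hQ3 : (1:ℝ) ≤ ((convQ x (n + 3) : ℤ) : ℝ) := by exact_mod_cast convQ_pos hx (n + 1)
    have hd0 : 0 < distZ ((σ n : ℝ) * x) := distZ_pos hx (hσ1 n)
    have hdle : distZ ((σ n : ℝ) * x) ≤ ((convQ x (n + 3) : ℤ) : ℝ)⁻¹ := by
      calc distZ ((σ n : ℝ) * x) ≤ |((σ n : ℝ)) * x - (convP x (n + 2) : ℝ)| :=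
            distZ_le _ (convP x (n + 2))
        _ = |((convQ x (n + 2) : ℤ) : ℝ) * x - (convP x (n + 2) : ℝ)| := by rw [hσcast n]
        _ ≤ _ := err_le hx n
    have hinv : ((convQ x (n + 3) : ℤ) : ℝ) ≤ (distZ ((σ n : ℝ) * x))⁻¹ := by
      rw [← inv_inv ((convQ x (n + 3) : ℤ) : ℝ)]
      exact inv_anti₀ hd0 hdle
    have hlog : Real.log ((convQ x (n + 3) : ℤ) : ℝ) ≤ Real.log (distZ ((σ n : ℝ) * x))⁻¹ :=
      Real.log_le_log (by linarith) hinv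
    have hdiv : Real.log ((convQ x (n + 3) : ℤ) : ℝ) / ((convQ x (n + 2) : ℤ) : ℝ) ≤
        Real.log (distZ ((σ n : ℝ) * x))⁻¹ / (σ n : ℝ) := by
      rw [← hσcast n]
      have hσpos : (0:ℝ) < (σ n : ℝ) := by rw [hσcast n]; linarith
      exact (div_le_div_iff_of_pos_right hσpos).2 hlog
    exact ENNReal.ofReal_le_ofReal hdiv
  have step1 : Filter.limsup
      (fun n : ℕ => ENNReal.ofReal (Real.log (convQ x (n + 3) : ℝ) / (convQ x (n + 2) : ℝ)))
      Filter.atTop ≤ Filter.limsup (F ∘ σ) Filter.atTop :=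
    Filter.limsup_le_limsup (Filter.Eventually.of_forall hpoint)
  have step2 : Filter.limsup (F ∘ σ) Filter.atTop = Filter.limsup F (Filter.map σ Filter.atTop) :=
    Filter.limsup_comp F σ _
  have hσtop : Filter.Tendsto σ Filter.atTop Filter.atTop := by
    apply Filter.tendsto_atTop_mono (f := fun n : ℕ => (n : ℕ))
    · intro n
      have h1 := convQ_ge hx n
      simp only [hσdef, id]
      omega
    · exact Filter.tendsto_id
  have step3 : Filter.limsup F (Filter.map σ Filter.atTop) ≤ Filter.limsup F Filter.atTop :=
    Filter.limsup_le_limsup_of_le hσtop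
  exact step1.trans (step2 ▸ step3) |>.trans (le_refl _)

open Classical in
/-- Largest `m` with `2 ≤ m` and `q_m ≤ q`. -/
noncomputable def Nq (x : ℝ) (q : ℕ) : ℕ :=
  Nat.findGreatest (fun m => convQ x m ≤ (q : ℤ) ∧ 2 ≤ m) (q + 2)

lemma Nq_ge_two {x : ℝ} (hx : Irrational x) {q : ℕ} (hq : 1 ≤ q) : 2 ≤ Nq x q := by
  classical
  apply Nat.le_findGreatest (by omega)
  constructor
  · show convQ x 2 ≤ (q : ℤ)
    have : convQ x 2 = 1 := by simp [convQ]
    omega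
  · omega

lemma Nq_le {x : ℝ} (hx : Irrational x) {q : ℕ} (hq : 1 ≤ q) : convQ x (Nq x q) ≤ (q : ℤ) := by
  classical
  have hP2 : (fun m => convQ x m ≤ (q : ℤ) ∧ 2 ≤ m) 2 := by
    refine ⟨?_, le_refl 2⟩
    have h1 : convQ x 2 = 1 := by simp [convQ]
    omega
  unfold Nq
  exact (Nat.findGreatest_spec (P := fun m => convQ x m ≤ (q : ℤ) ∧ 2 ≤ m) (n := q + 2) (m := 2) (by omega) hP2).1

lemma Nq_lt {x : ℝ} (hx : Irrational x) {q : ℕ} (hq : 1 ≤ q) :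
    (q : ℤ) < convQ x (Nq x q + 1) := by
  classical
  rcases le_or_gt (Nq x q + 1) (q + 2) with h | h
  · have hgt : Nat.findGreatest (fun m => convQ x m ≤ (q : ℤ) ∧ 2 ≤ m) (q + 2) < Nq x q + 1 := by
      unfold Nq; omega
    have hnp := Nat.findGreatest_is_greatest hgt h
    have h2 := Nq_ge_two hx hq
    by_contra hc
    push_neg at hc
    exact hnp ⟨hc, by omega⟩
  · -- Nq x q + 1 > q + 2, but Nq ≤ q + 2, so Nq = q + 2, so Nq + 1 = q + 3
    have hle : Nq x q ≤ q + 2 := Nat.findGreatest_le _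
    have heq : Nq x q + 1 = q + 3 := by omega
    rw [heq]
    have := convQ_ge hx (q + 1)
    have h3 : q + 1 + 2 = q + 3 := by omega
    rw [h3] at this
    push_cast at this ⊢
    omega

lemma Nq_tendsto {x : ℝ} (hx : Irrational x) :
    Filter.Tendsto (Nq x) Filter.atTop Filter.atTop := by
  classical
  rw [Filter.tendsto_atTop]
  intro b
  rw [Filter.eventually_atTop]
  refine ⟨max (max b 1) (convQ x (b + 2)).toNat, fun q hq => ?_⟩
  have hq1 : 1 ≤ q := le_trans (le_max_right b 1) (le_trans (le_max_left _ _) hq)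
  have hqb : b ≤ q := le_trans (le_max_left b 1) (le_trans (le_max_left _ _) hq)
  have hqQ : (convQ x (b + 2)).toNat ≤ q := le_trans (le_max_right _ _) hq
  have hQq : convQ x (b + 2) ≤ (q : ℤ) := by
    have h0 := convQ_nonneg hx (b + 2)
    omega
  have : b + 2 ≤ Nq x q := by
    apply Nat.le_findGreatest (by omega)
    exact ⟨hQq, by omega⟩
  omega

lemma case_bound {x : ℝ} (hx : Irrational x) {q : ℕ} (hq : 1 ≤ q) :
    ENNReal.ofReal (Real.log (distZ ((q : ℝ) * x))⁻¹ / (q : ℝ)) ≤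
      ENNReal.ofReal (Real.log (convQ x (Nq x q + 1) : ℝ) / (convQ x (Nq x q) : ℝ)) +
      ENNReal.ofReal (Real.log (4 * (q : ℝ)) / (q : ℝ)) := by
  obtain ⟨k, hk⟩ : ∃ k, Nq x q = k + 2 := ⟨Nq x q - 2, by have := Nq_ge_two hx hq; omega⟩
  have hm : convQ x (k + 2) ≤ (q : ℤ) := by rw [← hk]; exact Nq_le hx hq
  have hlt : (q : ℤ) < convQ x (k + 3) := by
    have := Nq_lt hx hq; rwa [hk] at this
  rw [hk]
  set d := distZ ((q : ℝ) * x) with hd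
  have hd0 : 0 < d := distZ_pos hx hq
  have hqR : (1:ℝ) ≤ (q : ℝ) := by exact_mod_cast hq
  have hQ2 : (1:ℝ) ≤ ((convQ x (k + 2) : ℤ) : ℝ) := by exact_mod_cast convQ_pos hx k
  have hQ3 : (1:ℝ) ≤ ((convQ x (k + 3) : ℤ) : ℝ) := by exact_mod_cast convQ_pos hx (k + 1)
  have hQ4 : (1:ℝ) ≤ ((convQ x (k + 4) : ℤ) : ℝ) := by exact_mod_cast convQ_pos hx (k + 2)
  have hmR : ((convQ x (k + 2) : ℤ) : ℝ) ≤ (q : ℝ) := by exact_mod_cast hm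
  have hltR : (q : ℝ) < ((convQ x (k + 3) : ℤ) : ℝ) := by exact_mod_cast hlt
  have hlog4q : 0 ≤ Real.log (4 * (q : ℝ)) := Real.log_nonneg (by linarith)
  rcases le_or_gt (2 * (q : ℤ)) (convQ x (k + 4)) with hcase | hcase
  · -- Case A
    have hkey := key_lower hx (k + 1) q hq hlt (round ((q : ℝ) * x))
    have hcR : 2 * (q : ℝ) ≤ ((convQ x (k + 4) : ℤ) : ℝ) := by exact_mod_cast hcase
    have hfrac : (q : ℝ) / ((convQ x (k + 4) : ℤ) : ℝ) ≤ 1 / 2 := by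
      rw [div_le_div_iff₀ (by linarith) (by norm_num)]
      linarith
    have hdlb : 1 / (2 * ((convQ x (k + 3) : ℤ) : ℝ)) ≤ d := by
      have h1 : 1 / (2 * ((convQ x (k + 3) : ℤ) : ℝ)) ≤
          (1 - (q : ℝ) / ((convQ x (k + 4) : ℤ) : ℝ)) / ((convQ x (k + 3) : ℤ) : ℝ) := by
        rw [div_le_div_iff₀ (by linarith) (by linarith)]
        nlinarith
      exact le_trans h1 hkey
    have hinv : d⁻¹ ≤ 2 * ((convQ x (k + 3) : ℤ) : ℝ) := by
      rw [← inv_inv (2 * ((convQ x (k + 3) : ℤ) : ℝ))]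
      apply inv_anti₀
      · positivity
      · rw [inv_eq_one_div]; exact hdlb
    have hlog : Real.log d⁻¹ ≤ Real.log 2 + Real.log ((convQ x (k + 3) : ℤ) : ℝ) := by
      have h2 : Real.log d⁻¹ ≤ Real.log (2 * ((convQ x (k + 3) : ℤ) : ℝ)) :=
        Real.log_le_log (by positivity) hinv
      rwa [Real.log_mul (by norm_num) (by linarith)] at h2
    have hchain : Real.log d⁻¹ / (q : ℝ) ≤
        Real.log ((convQ x (k + 3) : ℤ) : ℝ) / ((convQ x (k + 2) : ℤ) : ℝ) +
          Real.log 2 / (q : ℝ) := by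
      have hlQ3 : 0 ≤ Real.log ((convQ x (k + 3) : ℤ) : ℝ) := Real.log_nonneg hQ3
      have h3 : Real.log ((convQ x (k + 3) : ℤ) : ℝ) / (q : ℝ) ≤
          Real.log ((convQ x (k + 3) : ℤ) : ℝ) / ((convQ x (k + 2) : ℤ) : ℝ) := by
        apply div_le_div_of_nonneg_left hlQ3 (by linarith) hmR
      have h4 : Real.log d⁻¹ / (q : ℝ) ≤
          (Real.log 2 + Real.log ((convQ x (k + 3) : ℤ) : ℝ)) / (q : ℝ) :=
        (div_le_div_iff_of_pos_right (by linarith)).2 hlog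
      rw [add_div] at h4
      linarith
    calc ENNReal.ofReal (Real.log d⁻¹ / (q : ℝ))
        ≤ ENNReal.ofReal (Real.log ((convQ x (k + 3) : ℤ) : ℝ) / ((convQ x (k + 2) : ℤ) : ℝ) +
            Real.log 2 / (q : ℝ)) := ENNReal.ofReal_le_ofReal hchain
      _ ≤ ENNReal.ofReal (Real.log ((convQ x (k + 3) : ℤ) : ℝ) / ((convQ x (k + 2) : ℤ) : ℝ)) +
            ENNReal.ofReal (Real.log 2 / (q : ℝ)) := ENNReal.ofReal_add_le
      _ ≤ _ := by
            apply add_le_add_right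
            apply ENNReal.ofReal_le_ofReal
            apply (div_le_div_iff_of_pos_right (by linarith : (0:ℝ) < (q:ℝ))).2
            apply Real.log_le_log (by norm_num)
            linarith
  · -- Case B
    have hmono : convQ x (k + 3) ≤ convQ x (k + 4) := convQ_mono hx (k + 1)
    have hlt4 : (q : ℤ) < convQ x (k + 4) := lt_of_lt_of_le hlt hmono
    have hkey := key_lower hx (k + 2) q hq hlt4 (round ((q : ℝ) * x))
    have hfib : convQ x (k + 3) + convQ x (k + 4) ≤ convQ x (k + 5) := convQ_fib hx (k + 1)
    have hQ5R : 2 * (q : ℝ) < ((convQ x (k + 5) : ℤ) : ℝ) := by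
      have : 2 * (q : ℤ) < convQ x (k + 5) := by omega
      exact_mod_cast this
    have hcR : ((convQ x (k + 4) : ℤ) : ℝ) < 2 * (q : ℝ) := by exact_mod_cast hcase
    have hdlb : 1 / (4 * (q : ℝ)) ≤ d := by
      have h1 : 1 / (4 * (q : ℝ)) ≤
          (1 - (q : ℝ) / ((convQ x (k + 5) : ℤ) : ℝ)) / ((convQ x (k + 4) : ℤ) : ℝ) := by
        have hQ5pos : (0:ℝ) < ((convQ x (k + 5) : ℤ) : ℝ) := by linarith
        have hfrac : (q : ℝ) / ((convQ x (k + 5) : ℤ) : ℝ) ≤ 1 / 2 := by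
          rw [div_le_div_iff₀ hQ5pos (by norm_num)]
          linarith
        rw [div_le_div_iff₀ (by linarith) (by linarith)]
        nlinarith
      exact le_trans h1 hkey
    have hinv : d⁻¹ ≤ 4 * (q : ℝ) := by
      rw [← inv_inv (4 * (q : ℝ))]
      apply inv_anti₀
      · positivity
      · rw [inv_eq_one_div]; exact hdlb
    have hlog : Real.log d⁻¹ ≤ Real.log (4 * (q : ℝ)) := Real.log_le_log (by positivity) hinv
    have hchain : Real.log d⁻¹ / (q : ℝ) ≤ Real.log (4 * (q : ℝ)) / (q : ℝ) :=
      (div_le_div_iff_of_pos_right (by linarith)).2 hlog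
    calc ENNReal.ofReal (Real.log d⁻¹ / (q : ℝ))
        ≤ ENNReal.ofReal (Real.log (4 * (q : ℝ)) / (q : ℝ)) := ENNReal.ofReal_le_ofReal hchain
      _ ≤ _ := self_le_add_left _ _

lemma dir_ge {x : ℝ} (hx : Irrational x) :
    Filter.limsup (fun q : ℕ => ENNReal.ofReal (Real.log (distZ ((q : ℝ) * x))⁻¹ / (q : ℝ)))
      Filter.atTop ≤
    Filter.limsup
      (fun n : ℕ => ENNReal.ofReal (Real.log (convQ x (n + 3) : ℝ) / (convQ x (n + 2) : ℝ)))
      Filter.atTop := by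
  set h : ℕ → ℝ≥0∞ :=
    fun n => ENNReal.ofReal (Real.log (convQ x (n + 1) : ℝ) / (convQ x n : ℝ)) with hh
  set G : ℕ → ℝ≥0∞ := fun q => h (Nq x q) with hG
  set E : ℕ → ℝ≥0∞ := fun q => ENNReal.ofReal (Real.log (4 * (q : ℝ)) / (q : ℝ)) with hE
  have hbound : ∀ᶠ q : ℕ in Filter.atTop,
      ENNReal.ofReal (Real.log (distZ ((q : ℝ) * x))⁻¹ / (q : ℝ)) ≤ (G + E) q := by
    rw [Filter.eventually_atTop]
    exact ⟨1, fun q hq => case_bound hx hq⟩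
  have step1 : Filter.limsup
      (fun q : ℕ => ENNReal.ofReal (Real.log (distZ ((q : ℝ) * x))⁻¹ / (q : ℝ)))
      Filter.atTop ≤ Filter.limsup (G + E) Filter.atTop :=
    Filter.limsup_le_limsup hbound
  have hEt : Filter.Tendsto E Filter.atTop (nhds 0) := by
    have h1 : (fun y : ℝ => Real.log (4 * y)) =o[Filter.atTop] (fun y : ℝ => 4 * y) := by
      have hcomp : Filter.Tendsto (fun y : ℝ => 4 * y) Filter.atTop Filter.atTop :=
        Filter.Tendsto.const_mul_atTop (by norm_num) Filter.tendsto_id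
      exact Real.isLittleO_log_id_atTop.comp_tendsto hcomp
    have h2 : (fun y : ℝ => 4 * y) =O[Filter.atTop] (id : ℝ → ℝ) := by
      exact Asymptotics.isBigO_const_mul_self (4:ℝ) id Filter.atTop
    have h4 : Filter.Tendsto (fun y : ℝ => Real.log (4 * y) / y) Filter.atTop (nhds 0) := by
      simpa using (h1.trans_isBigO h2).tendsto_div_nhds_zero
    have h5 : Filter.Tendsto (fun q : ℕ => Real.log (4 * (q:ℝ)) / (q:ℝ)) Filter.atTop (nhds 0) :=
      h4.comp tendsto_natCast_atTop_atTop
    have h6 := (ENNReal.continuous_ofReal.tendsto 0).comp h5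
    simpa [hE, Function.comp_def] using h6
  have step23 : Filter.limsup (G + E) Filter.atTop ≤ Filter.limsup G Filter.atTop := by
    apply ENNReal.le_of_forall_pos_le_add
    intro ε hε _
    have hev : ∀ᶠ q : ℕ in Filter.atTop, E q < (ε : ℝ≥0∞) := by
      apply hEt.eventually_lt_const
      exact_mod_cast hε
    have hev2 : ∀ᶠ q : ℕ in Filter.atTop, (G + E) q ≤ G q + (ε : ℝ≥0∞) := by
      filter_upwards [hev] with q hq
      exact add_le_add_right hq.le _
    calc Filter.limsup (G + E) Filter.atTop
        ≤ Filter.limsup (fun q => G q + (ε : ℝ≥0∞)) Filter.atTop :=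
          Filter.limsup_le_limsup hev2
      _ = Filter.limsup G Filter.atTop + (ε : ℝ≥0∞) :=
          limsup_add_const Filter.atTop G (ε : ℝ≥0∞) (by isBoundedDefault) (by isBoundedDefault)
  have step4 : Filter.limsup G Filter.atTop ≤ Filter.limsup h Filter.atTop := by
    have : Filter.limsup G Filter.atTop = Filter.limsup h (Filter.map (Nq x) Filter.atTop) :=
      Filter.limsup_comp h (Nq x) _
    rw [this]
    exact Filter.limsup_le_limsup_of_le (Nq_tendsto hx)
  have step5 : Filter.limsup h Filter.atTop = Filter.limsup
      (fun n : ℕ => ENNReal.ofReal (Real.log (convQ x (n + 3) : ℝ) / (convQ x (n + 2) : ℝ)))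
      Filter.atTop := by
    have hmap : Filter.map (fun n : ℕ => n + 2) Filter.atTop = (Filter.atTop : Filter ℕ) :=
      Filter.map_add_atTop_eq_nat 2
    have : Filter.limsup (h ∘ (fun n : ℕ => n + 2)) Filter.atTop =
        Filter.limsup h (Filter.map (fun n : ℕ => n + 2) Filter.atTop) :=
      Filter.limsup_comp h _ _
    rw [hmap] at this
    rw [← this]
    rfl
  exact le_trans step1 (le_trans step23 (le_trans step4 (le_of_eq step5)))

/-- For irrational `x`, `limsup_n (log q_{n+1})/q_n` equals
`limsup_{q→∞} log(1/dist(qx,ℤ))/q`. -/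
theorem stmt5 (x : ℝ) (hx : Irrational x) :
    Filter.limsup
      (fun n : ℕ => ENNReal.ofReal (Real.log (convQ x (n + 3) : ℝ) / (convQ x (n + 2) : ℝ)))
      Filter.atTop = Bsup x := by
  unfold Bsup
  exact le_antisymm (dir_le hx) (dir_ge hx)
end

section
/- For an irrational real number x ≠ 0, the exponential type satisfies B_sup(x) = |x| · B_sup(1/x), where B_sup(x) is the limsup over positive integers q of log(1/dist(qx,ℤ))/q, valued in [0,+∞] (with the convention ∞·c = ∞ for c > 0). -/
open Filter
open scoped ENNReal

lemma distZ_le_int (y : ℝ) (m : ℤ) : distZ y ≤ |y - m| := by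
  rcases eq_or_ne m (round y) with h | h
  · simp [distZ, h]
  · have h1 : (1 : ℝ) ≤ |(m : ℝ) - (round y : ℝ)| := by
      have hcast : ((m - round y : ℤ) : ℝ) = (m : ℝ) - (round y : ℝ) := by push_cast; ring
      rw [← hcast, ← Int.cast_abs]
      exact_mod_cast Int.one_le_abs (sub_ne_zero.mpr h)
    have h2 : |y - (round y : ℝ)| ≤ 1 / 2 := abs_sub_round y
    have h3 : |(m : ℝ) - (round y : ℝ)| ≤ |(m : ℝ) - y| + |y - (round y : ℝ)| :=
      abs_sub_le _ _ _
    have h4 : |y - (m : ℝ)| = |(m : ℝ) - y| := abs_sub_comm _ _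
    rw [distZ, h4]
    linarith

theorem distZ_neg (y : ℝ) : distZ (-y) = distZ y := by
  apply le_antisymm
  · calc distZ (-y) ≤ |(-y) - ((-round y : ℤ) : ℝ)| := distZ_le_int _ _
      _ = |y - round y| := by push_cast; rw [← abs_neg]; ring_nf
  · calc distZ y ≤ |y - ((-round (-y) : ℤ) : ℝ)| := distZ_le_int _ _
      _ = |(-y) - round (-y)| := by push_cast; rw [← abs_neg]; ring_nf

lemma distZ_pos_s8 (y : ℝ) (hy : Irrational y) : 0 < distZ y := by
  rw [distZ, abs_pos, sub_ne_zero]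
  exact hy.ne_int _

lemma bsup_key (x : ℝ) (hx : Irrational x) (hx0 : x ≠ 0) :
    Bsup x ≤ ENNReal.ofReal |x| * Bsup (1 / x) := by
  have habs : 0 < |x| := abs_pos.mpr hx0
  by_cases hG : Bsup (1 / x) = ⊤
  · rw [hG, ENNReal.mul_top (by simpa [ENNReal.ofReal_eq_zero, not_le] using habs)]
    exact le_top
  set Gr : ℝ := (Bsup (1 / x)).toReal with hGrdef
  have hGr0 : 0 ≤ Gr := ENNReal.toReal_nonneg
  have hGrG : Bsup (1 / x) = ENNReal.ofReal Gr := (ENNReal.ofReal_toReal hG).symm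
  refine ENNReal.le_of_forall_pos_le_add fun ε hε _ => ?_
  set G' : ℝ := Gr + (ε : ℝ) / (2 * |x|) with hG'def
  set δ : ℝ := (ε : ℝ) / 2 with hδdef
  have hεpos : (0 : ℝ) < ε := hε
  have hδpos : 0 < δ := by positivity
  have hG'gt : Gr < G' := by
    have h0 : 0 < (ε : ℝ) / (2 * |x|) := by positivity
    show Gr < Gr + (ε : ℝ) / (2 * |x|)
    exact lt_add_of_pos_right _ h0
  have hG'pos : 0 < G' := lt_of_le_of_lt hGr0 hG'gt
  set c : ℝ := |x| * G' + δ with hcdef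
  have hcpos : 0 < c := by positivity
  -- Step 1: eventual lower bound on distZ (n * (1/x))
  have hlt : Bsup (1 / x) < ENNReal.ofReal G' := by
    rw [hGrG]
    exact (ENNReal.ofReal_lt_ofReal_iff hG'pos).mpr hG'gt
  have hev : ∀ᶠ n : ℕ in atTop,
      ENNReal.ofReal (Real.log (distZ ((n : ℝ) * (1 / x)))⁻¹ / (n : ℝ))
        < ENNReal.ofReal G' :=
    Filter.eventually_lt_of_limsup_lt hlt
  obtain ⟨N0, hN0⟩ := Filter.eventually_atTop.mp hev
  set N : ℕ := max N0 1 with hNdef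
  have hNbound : ∀ n : ℕ, N ≤ n →
      Real.exp (-(G' * (n : ℝ))) ≤ distZ ((n : ℝ) * (1 / x)) := by
    intro n hn
    have hn1 : 1 ≤ n := le_trans (le_max_right _ _) hn
    have hnR : (0 : ℝ) < (n : ℝ) := by exact_mod_cast hn1
    have hirr : Irrational ((n : ℝ) * (1 / x)) := by
      rw [one_div]
      exact hx.inv.natCast_mul (by omega)
    have hd : 0 < distZ ((n : ℝ) * (1 / x)) := distZ_pos_s8 _ hirr
    have hlt' := hN0 n (le_trans (le_max_left _ _) hn)
    have hle : Real.log (distZ ((n : ℝ) * (1 / x)))⁻¹ / (n : ℝ) ≤ G' := by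
      by_contra hcon
      push_neg at hcon
      exact absurd (ENNReal.ofReal_le_ofReal hcon.le) (not_le.mpr hlt')
    have hle2 : Real.log (distZ ((n : ℝ) * (1 / x)))⁻¹ ≤ G' * (n : ℝ) :=
      (div_le_iff₀ hnR).mp hle
    rw [Real.log_inv] at hle2
    have : -(G' * (n : ℝ)) ≤ Real.log (distZ ((n : ℝ) * (1 / x))) := by linarith
    calc Real.exp (-(G' * (n : ℝ))) ≤ Real.exp (Real.log (distZ ((n : ℝ) * (1 / x)))) :=
          Real.exp_le_exp.mpr this
      _ = distZ ((n : ℝ) * (1 / x)) := Real.exp_log hd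
  -- Step 2: eventual upper bound on f q
  have hq_ev : ∀ᶠ q : ℕ in atTop,
      ENNReal.ofReal (Real.log (distZ ((q : ℝ) * x))⁻¹ / (q : ℝ))
        ≤ ENNReal.ofReal (|x| * G' + δ) := by
    have hten : Tendsto (fun q : ℕ => (q : ℝ) * |x|) atTop atTop :=
      (tendsto_natCast_atTop_atTop).atTop_mul_const habs
    have hten2 : Tendsto (fun q : ℕ => δ * (q : ℝ)) atTop atTop :=
      (tendsto_natCast_atTop_atTop).const_mul_atTop hδpos
    filter_upwards [Filter.eventually_ge_atTop 1, hten.eventually_ge_atTop 1,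
      hten.eventually_ge_atTop ((N : ℝ) + 1), hten2.eventually_ge_atTop (G' + Real.log |x|⁻¹)]
      with q h1 h2 h3 h4
    have hqR : (0 : ℝ) < (q : ℝ) := by exact_mod_cast h1
    set p : ℤ := round ((q : ℝ) * x) with hpdef
    set ε₀ : ℝ := distZ ((q : ℝ) * x) with hε₀def
    have hirrq : Irrational ((q : ℝ) * x) := hx.natCast_mul (by omega)
    have hε₀pos : 0 < ε₀ := distZ_pos_s8 _ hirrq
    have hε₀half : ε₀ ≤ 1 / 2 := abs_sub_round _
    rcases le_or_gt (Real.log ε₀⁻¹ / (q : ℝ)) (|x| * G' + δ) with hcase | hcase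
    · exact ENNReal.ofReal_le_ofReal hcase
    exfalso
    have hclog : c * (q : ℝ) < Real.log ε₀⁻¹ := (lt_div_iff₀ hqR).mp hcase
    have hεlt : ε₀ < Real.exp (-(c * (q : ℝ))) := by
      have h5 : Real.exp (c * (q : ℝ)) < ε₀⁻¹ := by
        calc Real.exp (c * (q : ℝ)) < Real.exp (Real.log ε₀⁻¹) := Real.exp_lt_exp.mpr hclog
          _ = ε₀⁻¹ := Real.exp_log (by positivity)
      have := inv_strictAnti₀ (Real.exp_pos _) h5
      rwa [inv_inv, ← Real.exp_neg] at this
    have hexp1 : Real.exp (-(c * (q : ℝ))) ≤ 1 := by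
      rw [Real.exp_le_one_iff]
      nlinarith
    have hqx : |(q : ℝ) * x| = (q : ℝ) * |x| := by
      rw [abs_mul, abs_of_nonneg hqR.le]
    -- p ≠ 0
    have hp0 : p ≠ 0 := by
      intro h0
      have : ε₀ = (q : ℝ) * |x| := by
        rw [hε₀def, distZ, ← hpdef, h0]
        push_cast
        rw [sub_zero, hqx]
      nlinarith
    set n : ℕ := p.natAbs with hndef
    have hn_cast : (n : ℝ) = |(p : ℝ)| := by
      rw [hndef, Nat.cast_natAbs, Int.cast_abs]
    have htri : |(q : ℝ) * x| - |(p : ℝ)| ≤ ε₀ := by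
      have := abs_sub_abs_le_abs_sub ((q : ℝ) * x) (p : ℝ)
      rw [hε₀def, distZ, ← hpdef]
      exact this
    have htri2 : |(p : ℝ)| - |(q : ℝ) * x| ≤ ε₀ := by
      have := abs_sub_abs_le_abs_sub ((p : ℝ)) ((q : ℝ) * x)
      rw [hε₀def, distZ, ← hpdef, abs_sub_comm]
      exact this
    have hlb : (q : ℝ) * |x| - ε₀ ≤ (n : ℝ) := by rw [hn_cast]; rw [hqx] at htri; linarith
    have hub : (n : ℝ) ≤ (q : ℝ) * |x| + 1 := by
      rw [hn_cast]; rw [hqx] at htri2; linarith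
    have hnN : N ≤ n := by
      have : (N : ℝ) ≤ (n : ℝ) := by linarith
      exact_mod_cast this
    have hd1 := hNbound n hnN
    -- distZ (n * (1/x)) ≤ ε₀ / |x|
    have hd2 : distZ ((n : ℝ) * (1 / x)) ≤ ε₀ / |x| := by
      have key : distZ ((p : ℝ) * (1 / x)) ≤ ε₀ / |x| := by
        calc distZ ((p : ℝ) * (1 / x)) ≤ |(p : ℝ) * (1 / x) - ((q : ℤ) : ℝ)| :=
              distZ_le_int _ _
          _ = ε₀ / |x| := by
              rw [hε₀def, distZ, ← hpdef]
              rw [abs_sub_comm ((q : ℝ) * x)]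
              rw [← abs_div]
              congr 1
              push_cast
              field_simp
      rcases abs_cases ((p : ℝ)) with ⟨habs_eq, _⟩ | ⟨habs_eq, _⟩
      · rw [hn_cast, habs_eq]; exact key
      · rw [hn_cast, habs_eq, neg_mul, distZ_neg]; exact key
    have hchain : Real.exp (-(G' * ((q : ℝ) * |x| + 1))) ≤ ε₀ / |x| := by
      refine le_trans ?_ (hd1.trans hd2)
      apply Real.exp_le_exp.mpr
      have : G' * (n : ℝ) ≤ G' * ((q : ℝ) * |x| + 1) :=
        mul_le_mul_of_nonneg_left hub hG'pos.le
      linarith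
    have hε₀lb : |x| * Real.exp (-(G' * ((q : ℝ) * |x| + 1))) ≤ ε₀ := by
      rw [le_div_iff₀ habs, mul_comm] at hchain
      linarith
    have hlog : Real.log ε₀⁻¹ ≤ Real.log |x|⁻¹ + G' * ((q : ℝ) * |x| + 1) := by
      have hpos' : (0 : ℝ) < |x| * Real.exp (-(G' * ((q : ℝ) * |x| + 1))) := by positivity
      have := Real.log_le_log hpos' hε₀lb
      rw [Real.log_mul habs.ne' (Real.exp_ne_zero _), Real.log_exp] at this
      rw [Real.log_inv, Real.log_inv]
      linarith
    have hfinal : Real.log ε₀⁻¹ / (q : ℝ) ≤ |x| * G' + δ := by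
      rw [div_le_iff₀ hqR]
      have hexpand : G' * ((q : ℝ) * |x| + 1) = (|x| * G') * (q : ℝ) + G' := by ring
      have hexpand2 : (|x| * G' + δ) * (q : ℝ) = (|x| * G') * (q : ℝ) + δ * (q : ℝ) := by ring
      linarith [hlog, h4]
    linarith [hcase, hfinal]
  -- conclude
  have hlimsup : Bsup x ≤ ENNReal.ofReal (|x| * G' + δ) :=
    Filter.limsup_le_of_le (by isBoundedDefault) hq_ev
  have heq : |x| * G' + δ = |x| * Gr + (ε : ℝ) := by
    have hhalf : |x| * ((ε : ℝ) / (2 * |x|)) = (ε : ℝ) / 2 := by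
      field_simp
    rw [hG'def, hδdef, mul_add, hhalf]
    ring
  calc Bsup x ≤ ENNReal.ofReal (|x| * G' + δ) := hlimsup
    _ = ENNReal.ofReal (|x| * Gr) + ENNReal.ofReal (ε : ℝ) := by
        rw [heq, ENNReal.ofReal_add (by positivity) hεpos.le]
    _ = ENNReal.ofReal |x| * Bsup (1 / x) + ε := by
        rw [ENNReal.ofReal_mul (abs_nonneg x), ← hGrG, ENNReal.ofReal_coe_nnreal]

/-- For irrational `x ≠ 0`, `B_sup(x) = |x| · B_sup(1/x)` (in `ℝ≥0∞`, so `∞·c = ∞` for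
`c > 0`). -/
theorem stmt8 (x : ℝ) (hx : Irrational x) (hx0 : x ≠ 0) :
    Bsup x = ENNReal.ofReal |x| * Bsup (1 / x) := by
  have hx1 : Irrational (1 / x) := by rw [one_div]; exact hx.inv
  have hx10 : 1 / x ≠ 0 := one_div_ne_zero hx0
  have le1 := bsup_key x hx hx0
  have le2 := bsup_key (1 / x) hx1 hx10
  rw [one_div_one_div] at le2
  refine le_antisymm le1 ?_
  calc ENNReal.ofReal |x| * Bsup (1 / x)
      ≤ ENNReal.ofReal |x| * (ENNReal.ofReal |1 / x| * Bsup x) := by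
        exact mul_le_mul_right le2 _
    _ = (ENNReal.ofReal |x| * ENNReal.ofReal |1 / x|) * Bsup x := by ring
    _ = ENNReal.ofReal (|x| * |1 / x|) * Bsup x := by
        rw [ENNReal.ofReal_mul (abs_nonneg x)]
    _ = Bsup x := by
        rw [← abs_mul, mul_one_div_cancel hx0]
        simp
end

section
/- Let x be an irrational real number and define C_sup(x) = limsup over L → ∞ of (1/L) Σ_{l=1}^{L} (−log{lx} − log{−lx}), where {·} is fractional part. Then B_sup(x) ≤ C_sup(x), where B_sup(x) is the exponential type of x (limsup over q of log(1/dist(qx,ℤ))/q). -/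
open Filter
open scoped ENNReal

/-- `C_sup(x) = limsup_{L→∞} (1/L) Σ_{l=1}^L (-log{lx} - log{-lx})`, valued in `[0,∞]`. -/
noncomputable def Csup (x : ℝ) : ℝ≥0∞ :=
  Filter.limsup (fun L : ℕ => ENNReal.ofReal ((1 / (L : ℝ)) *
    ∑ l ∈ Finset.Icc 1 L,
      (-Real.log (Int.fract ((l : ℝ) * x)) - Real.log (Int.fract (-((l : ℝ) * x))))))
    Filter.atTop

lemma fract_pos_lt {x : ℝ} (hx : Irrational x) : 0 < Int.fract x ∧ Int.fract x < 1 := by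
  refine ⟨lt_of_le_of_ne (Int.fract_nonneg x) ?_, Int.fract_lt_one x⟩
  intro h
  apply hx.ne_int ⌊x⌋
  rw [← Int.self_sub_floor x] at h
  linarith [h.symm]

lemma term_nonneg {y : ℝ} (hy : Irrational y) :
    0 ≤ -Real.log (Int.fract y) - Real.log (Int.fract (-y)) := by
  obtain ⟨h1, h2⟩ := fract_pos_lt hy
  obtain ⟨h3, h4⟩ := fract_pos_lt hy.neg
  have := Real.log_nonpos h1.le h2.le
  have := Real.log_nonpos h3.le h4.le
  linarith

lemma distZ_ge {y : ℝ} (hy : Irrational y) :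
    Int.fract y * Int.fract (-y) ≤ distZ y := by
  obtain ⟨h1, h2⟩ := fract_pos_lt hy
  obtain ⟨h3, h4⟩ := fract_pos_lt hy.neg
  rw [distZ, abs_sub_round_eq_min]
  have hneg : Int.fract (-y) = 1 - Int.fract y := by
    rw [Int.fract_neg]; exact ne_of_gt h1
  rw [hneg] at h3 h4 ⊢
  rcases le_total (Int.fract y) (1 - Int.fract y) with h | h
  · rw [min_eq_left h]; nlinarith
  · rw [min_eq_right h]; nlinarith

/-- For irrational `x`, `B_sup(x) ≤ C_sup(x)`. -/
theorem stmt10 (x : ℝ) (hx : Irrational x) : Bsup x ≤ Csup x := by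
  refine Filter.limsup_le_limsup ?_ isCobounded_le_of_bot isBounded_le_of_top
  filter_upwards [Filter.eventually_ge_atTop 1] with q hq
  apply ENNReal.ofReal_le_ofReal
  have hq0 : (0:ℝ) < q := by exact_mod_cast hq
  have hirr : ∀ l : ℕ, 1 ≤ l → Irrational ((l : ℝ) * x) := fun l hl =>
    hx.natCast_mul (by omega)
  have hqirr := hirr q hq
  have hlog : Real.log (distZ ((q : ℝ) * x))⁻¹ ≤
      -Real.log (Int.fract ((q : ℝ) * x)) - Real.log (Int.fract (-((q : ℝ) * x))) := by
    rw [Real.log_inv]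
    have hprod : 0 < Int.fract ((q:ℝ)*x) * Int.fract (-((q:ℝ)*x)) :=
      mul_pos (fract_pos_lt hqirr).1 (fract_pos_lt hqirr.neg).1
    have := Real.log_le_log hprod (distZ_ge hqirr)
    rw [Real.log_mul (ne_of_gt (fract_pos_lt hqirr).1)
      (ne_of_gt (fract_pos_lt hqirr.neg).1)] at this
    linarith
  have hsum : -Real.log (Int.fract ((q : ℝ) * x)) - Real.log (Int.fract (-((q : ℝ) * x))) ≤
      ∑ l ∈ Finset.Icc 1 q,
        (-Real.log (Int.fract ((l : ℝ) * x)) - Real.log (Int.fract (-((l : ℝ) * x)))) := by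
    exact Finset.single_le_sum
      (fun l hl => term_nonneg (hirr l (Finset.mem_Icc.mp hl).1))
      (by simp [Finset.mem_Icc, hq])
  have h2 := hlog.trans hsum
  rw [div_eq_mul_inv, mul_comm, ← one_div]
  gcongr
end

section
/- Let x be an irrational real number. With C_sup(x) = limsup_{L→∞} (1/L) Σ_{l=1}^{L} (−log{lx} − log{−lx}) and B_sup(x) the exponential type of x, one has C_sup(x) ≤ 4 + 4·B_sup(x). In particular, C_sup(x) is finite whenever B_sup(x) is finite. -/
open Filter
open scoped ENNReal

open MeasureTheory intervalIntegral

namespace S11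

lemma distZ_nonneg (y : ℝ) : 0 ≤ distZ y := abs_nonneg _

lemma distZ_le_half (y : ℝ) : distZ y ≤ 1/2 := by
  simpa [distZ] using abs_sub_round y

lemma distZ_le_abs_sub_int (y : ℝ) (n : ℤ) : distZ y ≤ |y - n| := by
  by_cases h : n = round y
  · simp [distZ, h]
  · have h1 : (1 : ℝ) ≤ |(round y : ℝ) - n| := by
      have : round y - n ≠ 0 := sub_ne_zero.mpr (fun hh => h hh.symm)
      have := Int.one_le_abs this
      calc (1:ℝ) ≤ |(round y - n : ℤ)| := by exact_mod_cast this
        _ = |(round y : ℝ) - n| := by push_cast; ring_nf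
  
    have h2 : |y - round y| ≤ 1/2 := abs_sub_round y
    have h3 : |(round y : ℝ) - n| ≤ |y - n| + |y - round y| := by
      have := abs_sub_abs_le_abs_sub ((round y : ℝ) - n) 0
      calc |(round y : ℝ) - n| = |(y - n) - (y - round y)| := by ring_nf
        _ ≤ |y - n| + |y - round y| := abs_sub _ _
    have : (1:ℝ)/2 ≤ |y - n| := by linarith
    calc distZ y ≤ 1/2 := distZ_le_half y
      _ ≤ |y - n| := this

lemma distZ_pos {y : ℝ} (hy : Irrational y) : 0 < distZ y := by
  rw [distZ, abs_pos, sub_ne_zero]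
  exact hy.ne_int (round y)

lemma distZ_sub_le (a b : ℝ) (m n : ℤ) : distZ (a - b) ≤ |(a - m) - (b - n)| := by
  have := distZ_le_abs_sub_int (a - b) (m - n)
  calc distZ (a - b) ≤ |(a - b) - (m - n : ℤ)| := this
    _ = |(a - m) - (b - n)| := by push_cast; ring_nf


variable {x : ℝ}

lemma dirichlet (hx : Irrational x) {n : ℕ} (hn : 1 ≤ n) :
    ∃ k, 1 ≤ k ∧ k ≤ n ∧ distZ ((k : ℝ) * x) < 1 / n := by
  classical
  set F : ℕ → ℕ := fun j => ⌊(n : ℝ) * Int.fract ((j : ℝ) * x)⌋₊ with hF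
  have hn' : (0:ℝ) < n := by exact_mod_cast hn
  have hmaps : ∀ j ∈ Finset.range (n + 1), F j ∈ Finset.range n := by
    intro j _
    have h0 : (0:ℝ) ≤ (n : ℝ) * Int.fract ((j : ℝ) * x) :=
      mul_nonneg (by positivity) (Int.fract_nonneg _)
    have h1 : (n : ℝ) * Int.fract ((j : ℝ) * x) < n := by
      have := Int.fract_lt_one ((j : ℝ) * x)
      nlinarith
    simp only [Finset.mem_range, hF]
    exact (Nat.floor_lt h0).mpr h1
  obtain ⟨j, hj, j', hj', hne, heq⟩ :=
    Finset.exists_ne_map_eq_of_card_lt_of_maps_to (by simp) hmaps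
  have key : ∀ a b : ℕ, a < b → b ≤ n → F a = F b →
      ∃ k, 1 ≤ k ∧ k ≤ n ∧ distZ ((k : ℝ) * x) < 1 / n := by
    intro a b hab hbn hFeq
    refine ⟨b - a, by omega, by omega, ?_⟩
    set u := (n : ℝ) * Int.fract ((a : ℝ) * x) with hu
    set v := (n : ℝ) * Int.fract ((b : ℝ) * x) with hv
    have hu0 : (0:ℝ) ≤ u := mul_nonneg (by positivity) (Int.fract_nonneg _)
    have hv0 : (0:ℝ) ≤ v := mul_nonneg (by positivity) (Int.fract_nonneg _)
    have hFeq' : ⌊u⌋₊ = ⌊v⌋₊ := hFeq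
    have h1 : |v - u| < 1 := by
      have l1 := Nat.floor_le hu0
      have l2 := Nat.lt_floor_add_one u
      have l3 := Nat.floor_le hv0
      have l4 := Nat.lt_floor_add_one v
      rw [hFeq'] at l1 l2
      rw [abs_lt]; constructor <;> linarith
    have h2' : (n:ℝ) * |Int.fract ((b : ℝ) * x) - Int.fract ((a : ℝ) * x)| < 1 := by
      have he : (n:ℝ) * |Int.fract ((b : ℝ) * x) - Int.fract ((a : ℝ) * x)| = |v - u| := by
        rw [← abs_of_pos hn', ← abs_mul]
        congr 1
        rw [hu, hv]; ring
      rw [he]; exact h1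
    have h2 : |Int.fract ((b : ℝ) * x) - Int.fract ((a : ℝ) * x)| < 1 / n := by
      rw [lt_div_iff₀ hn']
      linarith [mul_comm (n:ℝ) |Int.fract ((b : ℝ) * x) - Int.fract ((a : ℝ) * x)|]
    have h3 : distZ (((b - a : ℕ) : ℝ) * x) ≤
        |Int.fract ((b : ℝ) * x) - Int.fract ((a : ℝ) * x)| := by
      have hcast : ((b - a : ℕ) : ℝ) * x = (b : ℝ) * x - (a : ℝ) * x := by
        have : ((b - a : ℕ) : ℝ) = (b : ℝ) - a := by
          push_cast [Nat.cast_sub (le_of_lt hab)]; ring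
        rw [this]; ring
      rw [hcast]
      have e1 : Int.fract ((b:ℝ)*x) = (b:ℝ)*x - (⌊(b:ℝ)*x⌋ : ℝ) := rfl
      have e2 : Int.fract ((a:ℝ)*x) = (a:ℝ)*x - (⌊(a:ℝ)*x⌋ : ℝ) := rfl
      rw [e1, e2]
      exact distZ_sub_le ((b:ℝ)*x) ((a:ℝ)*x) ⌊(b:ℝ)*x⌋ ⌊(a:ℝ)*x⌋
    calc distZ (((b - a : ℕ) : ℝ) * x) ≤ _ := h3
      _ < 1 / n := h2
  simp only [Finset.mem_range] at hj hj'
  rcases lt_or_gt_of_ne hne with hlt | hlt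
  · exact key j j' hlt (by omega) heq
  · exact key j' j hlt (by omega) heq.symm

lemma exists_smaller (hx : Irrational x) (m : ℕ) (hm : 1 ≤ m) :
    ∃ k, m < k ∧ distZ ((k : ℝ) * x) < distZ ((m : ℝ) * x) := by
  classical
  have hne : (Finset.Icc 1 m).Nonempty := ⟨1, by simp [hm]⟩
  set ε : ℝ := (Finset.Icc 1 m).inf' hne (fun q => distZ ((q : ℝ) * x)) with hε
  have hεpos : 0 < ε := by
    rw [hε, Finset.lt_inf'_iff]
    intro q hq
    simp only [Finset.mem_Icc] at hq
    exact distZ_pos (hx.natCast_mul (by omega))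
  obtain ⟨n, hn⟩ := exists_nat_one_div_lt hεpos
  have hn1 : 1 ≤ n + 1 := by omega
  obtain ⟨k, hk1, hkn, hkd⟩ := dirichlet hx hn1
  have hkε : distZ ((k : ℝ) * x) < ε := by
    have hc : (1:ℝ) / ((n + 1 : ℕ) : ℝ) = 1 / ((n:ℝ) + 1) := by push_cast; ring
    rw [hc] at hkd
    exact lt_trans hkd hn
  have hkm : m < k := by
    by_contra h
    push_neg at h
    have : ε ≤ distZ ((k : ℝ) * x) :=
      Finset.inf'_le _ (by simp only [Finset.mem_Icc]; omega)
    linarith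
  refine ⟨k, hkm, lt_of_lt_of_le hkε ?_⟩
  exact Finset.inf'_le _ (by simp only [Finset.mem_Icc]; omega)


open scoped Classical in
noncomputable def nxt (x : ℝ) (m : ℕ) : ℕ :=
  if h : ∃ k, m < k ∧ distZ ((k : ℝ) * x) < distZ ((m : ℝ) * x) then Nat.find h else m + 1

noncomputable def rec (x : ℝ) : ℕ → ℕ := fun n => (nxt x)^[n] 1

variable {x : ℝ}

lemma rec_zero : rec x 0 = 1 := rfl

lemma rec_succ (n : ℕ) : rec x (n + 1) = nxt x (rec x n) :=
  Function.iterate_succ_apply' (nxt x) n 1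

open scoped Classical in
lemma nxt_spec (hx : Irrational x) {m : ℕ} (hm : 1 ≤ m) :
    m < nxt x m ∧ distZ ((nxt x m : ℝ) * x) < distZ ((m : ℝ) * x) := by
  rw [nxt]
  have h : ∃ k, m < k ∧ distZ ((k : ℝ) * x) < distZ ((m : ℝ) * x) := exists_smaller hx m hm
  simp only [h, dif_pos]
  exact Nat.find_spec h

open scoped Classical in
lemma nxt_min (hx : Irrational x) {m k : ℕ} (hm : 1 ≤ m) (hk : k < nxt x m) :
    ¬(m < k ∧ distZ ((k : ℝ) * x) < distZ ((m : ℝ) * x)) := by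
  rw [nxt] at hk
  have h : ∃ k, m < k ∧ distZ ((k : ℝ) * x) < distZ ((m : ℝ) * x) := exists_smaller hx m hm
  simp only [h, dif_pos] at hk
  exact Nat.find_min h hk

lemma rec_pos (hx : Irrational x) (n : ℕ) : 1 ≤ rec x n := by
  induction n with
  | zero => simp [rec_zero]
  | succ n ih =>
    rw [rec_succ]
    have := (nxt_spec hx ih).1
    omega

lemma rec_lt_succ (hx : Irrational x) (n : ℕ) : rec x n < rec x (n + 1) := by
  rw [rec_succ]; exact (nxt_spec hx (rec_pos hx n)).1

lemma rec_strictMono (hx : Irrational x) : StrictMono (rec x) :=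
  strictMono_nat_of_lt_succ (rec_lt_succ hx)

lemma rec_ge (hx : Irrational x) (n : ℕ) : n + 1 ≤ rec x n := by
  induction n with
  | zero => simp [rec_zero]
  | succ n ih => have := rec_lt_succ hx n; omega

noncomputable def dd (x : ℝ) (n : ℕ) : ℝ := distZ ((rec x n : ℝ) * x)

lemma dd_pos (hx : Irrational x) (n : ℕ) : 0 < dd x n :=
  distZ_pos (hx.natCast_mul (by have := rec_pos hx n; omega))

lemma dd_succ_lt (hx : Irrational x) (n : ℕ) : dd x (n + 1) < dd x n := by
  rw [dd, dd, rec_succ]; exact (nxt_spec hx (rec_pos hx n)).2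

lemma dd_le_half (n : ℕ) : dd x n ≤ 1/2 := distZ_le_half _

-- R1 : every 1 ≤ k < rec x (n+1) has distZ ≥ dd x n
lemma R1 (hx : Irrational x) (n : ℕ) {k : ℕ} (hk1 : 1 ≤ k) (hk : k < rec x (n + 1)) :
    dd x n ≤ distZ ((k : ℝ) * x) := by
  induction n with
  | zero =>
    rcases Nat.lt_or_ge k (rec x 0 + 1) with h | h
    · have : k = 1 := by have := rec_zero (x := x); omega
      subst this
      simp [dd, rec_zero, le_refl]
    · have h1 : rec x 0 < k := by omega
      have := nxt_min hx (rec_pos hx 0) (by rw [← rec_succ]; exact hk)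
      push_neg at this
      exact this h1
  | succ n ih =>
    rcases Nat.lt_or_ge k (rec x (n + 1)) with h | h
    · exact le_trans (le_of_lt (dd_succ_lt hx n)) (ih h)
    · rcases Nat.eq_or_lt_of_le h with h' | h'
      · rw [dd]; rw [← h']
      · have := nxt_min hx (rec_pos hx (n+1)) (by rw [← rec_succ]; exact hk)
        push_neg at this
        exact this h'

-- sign alternation setup
lemma theta_opp (hx : Irrational x) (n : ℕ) :
    ((rec x n : ℝ) * x - round ((rec x n : ℝ) * x)) *
      ((rec x (n+1) : ℝ) * x - round ((rec x (n+1) : ℝ) * x)) < 0 := by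
  set a := (rec x n : ℝ) * x - round ((rec x n : ℝ) * x) with ha
  set b := (rec x (n+1) : ℝ) * x - round ((rec x (n+1) : ℝ) * x) with hb
  have haa : |a| = dd x n := rfl
  have hbb : |b| = dd x (n+1) := rfl
  have ha0 : a ≠ 0 := by
    intro h; have := dd_pos hx n; rw [← haa, h] at this; simp at this
  have hb0 : b ≠ 0 := by
    intro h; have := dd_pos hx (n+1); rw [← hbb, h] at this; simp at this
  by_contra hcon
  push_neg at hcon
  have hsame : 0 < a * b := lt_of_le_of_ne hcon (by
    intro h; rcases mul_eq_zero.mp h.symm with h' | h' <;> [exact ha0 h'; exact hb0 h'])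
  -- same sign: |b - a| = dd n - dd (n+1) < dd n
  have habs : |b - a| = |(|b| - |a|)| := by
    rcases abs_cases a with ⟨e1, s1⟩ | ⟨e1, s1⟩ <;> rcases abs_cases b with ⟨e2, s2⟩ | ⟨e2, s2⟩ <;>
      [skip; nlinarith; nlinarith; skip] <;> rw [e1, e2] <;> rw [abs_sub_comm] <;> ring_nf
  have hlt : |b - a| < dd x n := by
    rw [habs, haa, hbb]
    have h1 := dd_succ_lt hx n
    have h2 := dd_pos hx (n+1)
    rw [abs_of_nonpos (by linarith)]
    linarith
  -- d := rec (n+1) - rec n, 1 ≤ d < rec (n+1)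
  set d : ℕ := rec x (n+1) - rec x n with hd
  have hd1 : 1 ≤ d := by have := rec_lt_succ hx n; omega
  have hdlt : d < rec x (n + 1) := by have := rec_pos hx n; have := rec_lt_succ hx n; omega
  have hcast : ((d : ℕ) : ℝ) * x = (rec x (n+1) : ℝ) * x - (rec x n : ℝ) * x := by
    have : ((d : ℕ) : ℝ) = (rec x (n+1) : ℝ) - rec x n := by
      rw [hd]; push_cast [Nat.cast_sub (le_of_lt (rec_lt_succ hx n))]; ring
    rw [this]; ring
  have hdist : distZ ((d : ℝ) * x) ≤ |b - a| := by
    rw [hcast]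
    have := distZ_sub_le ((rec x (n+1) : ℝ) * x) ((rec x n : ℝ) * x)
      (round ((rec x (n+1) : ℝ) * x)) (round ((rec x n : ℝ) * x))
    rw [ha, hb]
    exact this
  have := R1 hx n hd1 hdlt
  linarith

-- R2 : 1 ≤ rec (n+1) * dd n + rec n * dd (n+1)
lemma R2 (hx : Irrational x) (n : ℕ) :
    (1:ℝ) ≤ (rec x (n+1) : ℝ) * dd x n + (rec x n : ℝ) * dd x (n+1) := by
  set a := (rec x n : ℝ) * x - round ((rec x n : ℝ) * x) with ha
  set b := (rec x (n+1) : ℝ) * x - round ((rec x (n+1) : ℝ) * x) with hb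
  have haa : |a| = dd x n := rfl
  have hbb : |b| = dd x (n+1) := rfl
  have hopp := theta_opp hx n
  rw [← ha, ← hb] at hopp
  set D : ℤ := rec x n * round ((rec x (n+1) : ℝ) * x) -
      rec x (n+1) * round ((rec x n : ℝ) * x) with hD
  have hDr : (D : ℝ) = (rec x (n+1) : ℝ) * a - (rec x n : ℝ) * b := by
    rw [hD, ha, hb]; push_cast; ring
  have h1 : (0:ℝ) < rec x (n+1) := by exact_mod_cast rec_pos hx (n+1)
  have h2 : (0:ℝ) < rec x n := by exact_mod_cast rec_pos hx n
  have hprod : ((rec x (n+1) : ℝ) * a) * ((rec x n : ℝ) * b) < 0 := by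
    have he : ((rec x (n+1) : ℝ) * a) * ((rec x n : ℝ) * b)
        = ((rec x (n+1) : ℝ) * (rec x n : ℝ)) * (a * b) := by ring
    rw [he]
    exact mul_neg_of_pos_of_neg (mul_pos h1 h2) hopp
  have habs : |(D:ℝ)| = (rec x (n+1) : ℝ) * |a| + (rec x n : ℝ) * |b| := by
    rw [hDr]
    set u := (rec x (n+1) : ℝ) * a with hu
    set v := (rec x n : ℝ) * b with hv
    have habs2 : |u - v| = |u| + |v| := by
      rcases mul_neg_iff.mp hprod with ⟨hu1, hv1⟩ | ⟨hu1, hv1⟩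
      · rw [abs_of_pos hu1, abs_of_neg hv1, abs_of_pos (by linarith : 0 < u - v)]; ring
      · rw [abs_of_neg hu1, abs_of_pos hv1, abs_of_neg (by linarith : u - v < 0)]; ring
    rw [habs2, hu, hv, abs_mul, abs_mul, abs_of_nonneg (le_of_lt h1), abs_of_nonneg (le_of_lt h2)]
  have hD0 : D ≠ 0 := by
    intro h
    rw [h] at habs
    simp only [Int.cast_zero, abs_zero] at habs
    have := dd_pos hx n
    have := dd_pos hx (n+1)
    rw [haa, hbb] at habs
    nlinarith
  have : (1:ℝ) ≤ |(D:ℝ)| := by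
    have := Int.one_le_abs hD0
    calc (1:ℝ) ≤ |D| := by exact_mod_cast this
      _ = |(D:ℝ)| := by rw [Int.cast_abs]
  rw [habs, haa, hbb] at this
  exact this

lemma dd_ge (hx : Irrational x) (n : ℕ) : 1 / (2 * (rec x (n+1) : ℝ)) ≤ dd x n := by
  have h2 := R2 hx n
  have h1 : (0:ℝ) < rec x (n+1) := by exact_mod_cast rec_pos hx (n+1)
  have h3 : (rec x n : ℝ) ≤ rec x (n+1) := by exact_mod_cast le_of_lt (rec_lt_succ hx n)
  have h4 : dd x (n+1) ≤ dd x n := le_of_lt (dd_succ_lt hx n)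
  have h5 : 0 < dd x (n+1) := dd_pos hx (n+1)
  rw [div_le_iff₀ (by positivity)]
  nlinarith


noncomputable def cnt (x : ℝ) (L : ℕ) (s : ℝ) : ℕ :=
  ((Finset.Icc 1 L).filter (fun l : ℕ => distZ ((l : ℝ) * x) ≤ s)).card

lemma cnt_le (x : ℝ) (L : ℕ) (s : ℝ) : cnt x L s ≤ L := by
  calc cnt x L s ≤ (Finset.Icc 1 L).card := Finset.card_filter_le _ _
    _ = L := by rw [Nat.card_Icc]; omega

lemma dd_def (x : ℝ) (n : ℕ) : dd x n = distZ ((rec x n : ℝ) * x) := rfl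

/-- separated points in an interval: cardinality bound -/
lemma sep_card (δ : ℝ) (hδ : 0 < δ) :
    ∀ (N : ℕ) (T : Finset ℕ) (f : ℕ → ℝ) (lo hi : ℝ), T.card = N → lo ≤ hi →
    (∀ i ∈ T, f i ∈ Set.Icc lo hi) →
    (∀ i ∈ T, ∀ j ∈ T, i ≠ j → δ ≤ |f i - f j|) →
    (T.card : ℝ) ≤ (hi - lo) / δ + 1 := by
  intro N
  induction N with
  | zero =>
    intro T f lo hi hcard hlohi _ _
    rw [hcard]
    have : (0:ℝ) ≤ (hi - lo)/δ := div_nonneg (by linarith) (le_of_lt hδ)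
    push_cast; linarith
  | succ N ih =>
    intro T f lo hi hcard hlohi hmem hsep
    have hne : T.Nonempty := by
      rw [← Finset.card_pos, hcard]; omega
    obtain ⟨i0, hi0, hmax⟩ := T.exists_max_image f hne
    set T' := T.erase i0 with hT'
    have hcard' : T'.card = N := by rw [hT', Finset.card_erase_of_mem hi0, hcard]; omega
    rcases Nat.eq_zero_or_pos N with h0 | hNpos
    · rw [hcard, h0]
      have : (0:ℝ) ≤ (hi - lo)/δ := div_nonneg (by linarith) (le_of_lt hδ)
      push_cast; linarith
    · have hne' : T'.Nonempty := by rw [← Finset.card_pos, hcard']; omega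
      obtain ⟨j0, hj0⟩ := hne'
      have hj0T : j0 ∈ T := Finset.mem_of_mem_erase hj0
      have hj0ne : j0 ≠ i0 := Finset.ne_of_mem_erase hj0
      -- all elements of T' are ≤ f i0 - δ
      have hup : ∀ j ∈ T', f j ∈ Set.Icc lo (hi - δ) := by
        intro j hj
        have hjT : j ∈ T := Finset.mem_of_mem_erase hj
        have hjne : j ≠ i0 := Finset.ne_of_mem_erase hj
        have h1 := hsep j hjT i0 hi0 hjne
        have h2 := hmax j hjT
        have h3 := (hmem j hjT).1
        have h4 := (hmem i0 hi0).2
        have h5 : δ ≤ f i0 - f j := by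
          rcases abs_cases (f j - f i0) with ⟨e, _⟩ | ⟨e, _⟩ <;> rw [e] at h1 <;> linarith
        exact ⟨h3, by linarith⟩
      have hlohi' : lo ≤ hi - δ := by
        have h3 := (hup j0 hj0).1
        have h4 := (hup j0 hj0).2
        linarith
      have := ih T' f lo (hi - δ) hcard' hlohi' hup
        (fun i hi j hj hij => hsep i (Finset.mem_of_mem_erase hi) j (Finset.mem_of_mem_erase hj) hij)
      rw [hcard]
      rw [hcard'] at this
      have hstep : ((hi - δ) - lo)/δ = (hi - lo)/δ - 1 := by
        field_simp; ring
      rw [hstep] at this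
      push_cast
      push_cast at this
      linarith

/-- main block-counting bound -/
lemma countA (hx : Irrational x) (L : ℕ) (s : ℝ) (n : ℕ) (hs : 0 < s) (hL : 1 ≤ L)
    (hδ : dd x n ≤ 2 * s) :
    (cnt x L s : ℝ) ≤ ((L : ℝ) / (rec x (n+1)) + 1) * (2 * s / dd x n + 1) := by
  classical
  set m' := rec x (n+1) with hm'
  have hm'1 : 1 ≤ m' := rec_pos hx (n+1)
  have hδ0 := dd_pos hx n
  set T := (Finset.Icc 1 L).filter (fun l : ℕ => distZ ((l : ℝ) * x) ≤ s) with hT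
  set F : ℕ → ℕ := fun l => (l - 1) / m' with hF
  set K : ℕ := ⌊2 * s / dd x n⌋₊ + 1 with hK
  have hfib : ∀ a ∈ T.image F, (T.filter (fun l => F l = a)).card ≤ K := by
    intro a _
    set Tf := T.filter (fun l => F l = a) with hTf
    -- apply sep_card with f l = l x - round (l x), lo = -s, hi = s, δ = dd x n
    have hcard := sep_card (dd x n) hδ0 Tf.card Tf (fun l => (l : ℝ) * x - round ((l : ℝ) * x))
      (-s) s rfl (by linarith) ?_ ?_
    · -- conclude Tf.card ≤ K
      have h1 : (Tf.card : ℝ) ≤ 2 * s / dd x n + 1 := by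
        calc (Tf.card : ℝ) ≤ (s - -s) / dd x n + 1 := hcard
          _ = 2 * s / dd x n + 1 := by ring_nf
      have h2 : 2 * s / dd x n < (K : ℝ) := by
        rw [hK]
        push_cast
        have := Nat.lt_floor_add_one (2 * s / dd x n)
        linarith
      have : (Tf.card : ℝ) < (K : ℝ) + 1 := by linarith
      have : Tf.card < K + 1 := by exact_mod_cast this
      omega
    · -- membership in [-s, s]
      intro i hi
      simp only [hTf, Finset.mem_filter, hT] at hi
      have hdi : distZ ((i:ℝ)*x) ≤ s := hi.1.2
      have habs : |(i : ℝ) * x - round ((i : ℝ) * x)| ≤ s := hdi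
      rw [abs_le] at habs
      exact ⟨habs.1, habs.2⟩
    · -- separation
      intro i hi j hj hij
      simp only [hTf, Finset.mem_filter, hT, Finset.mem_Icc] at hi hj
      obtain ⟨⟨⟨hi1, hiL⟩, _⟩, hiF⟩ := hi
      obtain ⟨⟨⟨hj1, hjL⟩, _⟩, hjF⟩ := hj
      -- |i - j| < m' since same fiber
      have hd : ∀ p q : ℕ, p < q → 1 ≤ p → F p = F q → q - p < m' → True := fun _ _ _ _ _ _ => trivial
      have key : ∀ p q : ℕ, 1 ≤ p → p < q → F p = F q →
          dd x n ≤ |((q : ℝ) * x - round ((q : ℝ) * x)) - ((p : ℝ) * x - round ((p : ℝ) * x))| := by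
        intro p q hp1 hpq hFpq
        have hqp : q - p < m' := by
          have hFpq' : (p - 1) / m' = (q - 1) / m' := hFpq
          have e1 : m' * ((p-1)/m') + (p-1) % m' = p - 1 := Nat.div_add_mod _ _
          have e2 : m' * ((q-1)/m') + (q-1) % m' = q - 1 := Nat.div_add_mod _ _
          rw [hFpq'] at e1
          have e3 : (q-1) % m' < m' := Nat.mod_lt _ (by omega)
          have e4 : (p-1) % m' < m' := Nat.mod_lt _ (by omega)
          set M := m' * ((q-1)/m') with hM
          omega
        have h1 : 1 ≤ q - p := by omega
        have hcast : (((q - p : ℕ)) : ℝ) * x = (q : ℝ) * x - (p : ℝ) * x := by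
          have : (((q - p : ℕ)) : ℝ) = (q : ℝ) - p := by
            push_cast [Nat.cast_sub (le_of_lt hpq)]; ring
          rw [this]; ring
        have hR1 : dd x n ≤ distZ (((q - p : ℕ) : ℝ) * x) := R1 hx n h1 (by omega)
        calc dd x n ≤ distZ (((q - p : ℕ) : ℝ) * x) := hR1
          _ ≤ |((q : ℝ) * x - round ((q : ℝ) * x)) - ((p : ℝ) * x - round ((p : ℝ) * x))| := by
            rw [hcast]
            exact distZ_sub_le _ _ _ _
      rcases lt_or_gt_of_ne hij with h | h
      · rw [abs_sub_comm]; exact key i j hi1 h (by rw [hiF, hjF])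
      · exact key j i hj1 h (by rw [hiF, hjF])
  have himg : T.image F ⊆ Finset.range ((L - 1) / m' + 1) := by
    intro a ha
    obtain ⟨l, hl, hla⟩ := Finset.mem_image.mp ha
    simp only [hT, Finset.mem_filter, Finset.mem_Icc] at hl
    rw [Finset.mem_range, ← hla, hF]
    simp only
    have : (l - 1) / m' ≤ (L - 1)/ m' := Nat.div_le_div_right (by omega)
    omega
  have hcards : T.card ≤ K * ((L - 1) / m' + 1) := by
    calc T.card ≤ K * (T.image F).card := Finset.card_le_mul_card_image T K hfib
      _ ≤ K * ((L - 1) / m' + 1) := by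
        exact Nat.mul_le_mul_left K (le_trans (Finset.card_le_card himg) (by rw [Finset.card_range]))
  -- now cast
  have hK' : (K : ℝ) ≤ 2 * s / dd x n + 1 := by
    rw [hK]
    push_cast
    have := Nat.floor_le (div_nonneg (by linarith) (le_of_lt hδ0) : (0:ℝ) ≤ 2 * s / dd x n)
    linarith
  have hm'0 : (0:ℝ) < (m' : ℝ) := by exact_mod_cast hm'1
  have hblocks : (((L - 1) / m' + 1 : ℕ) : ℝ) ≤ (L : ℝ) / m' + 1 := by
    push_cast
    have h1 : (((L - 1) / m' : ℕ) : ℝ) ≤ ((L - 1 : ℕ) : ℝ) / (m' : ℝ) := Nat.cast_div_le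
    have h2 : ((L - 1 : ℕ) : ℝ) ≤ (L : ℝ) := Nat.cast_le.mpr (Nat.sub_le L 1)
    have h3 : ((L - 1 : ℕ) : ℝ) / (m' : ℝ) ≤ (L : ℝ) / m' := by
      have := mul_le_mul_of_nonneg_right h2 (le_of_lt (inv_pos.mpr hm'0))
      simpa [div_eq_mul_inv] using this
    linarith
  have hKnn : (0:ℝ) ≤ (K:ℝ) := Nat.cast_nonneg _
  have hfin : (T.card : ℝ) ≤ ((K : ℝ)) * (((L - 1) / m' + 1 : ℕ) : ℝ) := by
    exact_mod_cast Nat.cast_le.mpr hcards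
  have hrhs : ((K : ℝ)) * (((L - 1) / m' + 1 : ℕ) : ℝ) ≤ (2 * s / dd x n + 1) * ((L : ℝ) / m' + 1) := by
    apply mul_le_mul hK' hblocks (Nat.cast_nonneg _)
    have : (0:ℝ) ≤ 2 * s / dd x n := div_nonneg (by linarith) (le_of_lt hδ0)
    linarith
  calc (cnt x L s : ℝ) = (T.card : ℝ) := rfl
    _ ≤ _ := le_trans hfin hrhs
    _ = ((L : ℝ) / (rec x (n+1)) + 1) * (2 * s / dd x n + 1) := by rw [← hm']; ring

lemma countB (hx : Irrational x) (L : ℕ) (s : ℝ) (n : ℕ) (hs : 0 < s)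
    (hδ : 2 * s < dd x n) :
    (cnt x L s : ℝ) ≤ (L : ℝ) / (rec x (n+1)) + 1 := by
  classical
  set m' := rec x (n+1) with hm'
  have hm'1 : 1 ≤ m' := rec_pos hx (n+1)
  have hm'0 : (0:ℝ) < (m' : ℝ) := by exact_mod_cast hm'1
  set T := (Finset.Icc 1 L).filter (fun l : ℕ => distZ ((l : ℝ) * x) ≤ s) with hT
  set F : ℕ → ℕ := fun l => (l - 1) / m' with hF
  have hfib : ∀ a ∈ T.image F, (T.filter (fun l => F l = a)).card ≤ 1 := by
    intro a _
    rw [Finset.card_le_one]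
    intro i hi j hj
    simp only [Finset.mem_filter, hT, Finset.mem_Icc] at hi hj
    obtain ⟨⟨⟨hi1, hiL⟩, hid⟩, hiF⟩ := hi
    obtain ⟨⟨⟨hj1, hjL⟩, hjd⟩, hjF⟩ := hj
    by_contra hij
    have key : ∀ p q : ℕ, 1 ≤ p → p < q → q ≤ L → F p = F q →
        distZ ((p : ℝ) * x) ≤ s → distZ ((q : ℝ) * x) ≤ s → False := by
      intro p q hp1 hpq hqL hFpq hpd hqd
      have hqp : q - p < m' := by
        have hFpq' : (p - 1) / m' = (q - 1) / m' := hFpq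
        have e1 : m' * ((p-1)/m') + (p-1) % m' = p - 1 := Nat.div_add_mod _ _
        have e2 : m' * ((q-1)/m') + (q-1) % m' = q - 1 := Nat.div_add_mod _ _
        rw [hFpq'] at e1
        have e3 : (q-1) % m' < m' := Nat.mod_lt _ (by omega)
        have e4 : (p-1) % m' < m' := Nat.mod_lt _ (by omega)
        set M := m' * ((q-1)/m') with hM
        omega
      have h1 : 1 ≤ q - p := by omega
      have hR1 : dd x n ≤ distZ (((q - p : ℕ) : ℝ) * x) := R1 hx n h1 (by omega)
      have hcast : (((q - p : ℕ)) : ℝ) * x = (q : ℝ) * x - (p : ℝ) * x := by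
        have : (((q - p : ℕ)) : ℝ) = (q : ℝ) - p := by
          push_cast [Nat.cast_sub (le_of_lt hpq)]; ring
        rw [this]; ring
      have hsmall : distZ (((q - p : ℕ) : ℝ) * x) ≤ 2 * s := by
        rw [hcast]
        have h2 := distZ_sub_le ((q:ℝ)*x) ((p:ℝ)*x) (round ((q:ℝ)*x)) (round ((p:ℝ)*x))
        have h3 : |((q:ℝ)*x - round ((q:ℝ)*x)) - ((p:ℝ)*x - round ((p:ℝ)*x))|
            ≤ |(q:ℝ)*x - round ((q:ℝ)*x)| + |(p:ℝ)*x - round ((p:ℝ)*x)| := abs_sub _ _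
        have h4 : |(q:ℝ)*x - round ((q:ℝ)*x)| = distZ ((q:ℝ)*x) := rfl
        have h5 : |(p:ℝ)*x - round ((p:ℝ)*x)| = distZ ((p:ℝ)*x) := rfl
        rw [h4, h5] at h3
        linarith
      linarith
    rcases lt_or_gt_of_ne hij with h | h
    · exact key i j hi1 h hjL (by rw [hiF, hjF]) hid hjd
    · exact key j i hj1 h hiL (by rw [hiF, hjF]) hjd hid
  have himg : T.image F ⊆ Finset.range ((L - 1) / m' + 1) := by
    intro a ha
    obtain ⟨l, hl, hla⟩ := Finset.mem_image.mp ha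
    simp only [hT, Finset.mem_filter, Finset.mem_Icc] at hl
    rw [Finset.mem_range, ← hla, hF]
    simp only
    have : (l - 1) / m' ≤ (L - 1)/ m' := Nat.div_le_div_right (by omega)
    omega
  have hcards : T.card ≤ 1 * ((L - 1) / m' + 1) := by
    calc T.card ≤ 1 * (T.image F).card := Finset.card_le_mul_card_image T 1 hfib
      _ ≤ 1 * ((L - 1) / m' + 1) := by
        exact Nat.mul_le_mul_left 1 (le_trans (Finset.card_le_card himg) (by rw [Finset.card_range]))
  have hblocks : (((L - 1) / m' + 1 : ℕ) : ℝ) ≤ (L : ℝ) / m' + 1 := by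
    push_cast
    have h1 : (((L - 1) / m' : ℕ) : ℝ) ≤ ((L - 1 : ℕ) : ℝ) / (m' : ℝ) := Nat.cast_div_le
    have h2 : ((L - 1 : ℕ) : ℝ) ≤ (L : ℝ) := Nat.cast_le.mpr (Nat.sub_le L 1)
    have h3 : ((L - 1 : ℕ) : ℝ) / (m' : ℝ) ≤ (L : ℝ) / m' := by
      have := mul_le_mul_of_nonneg_right h2 (le_of_lt (inv_pos.mpr hm'0))
      simpa [div_eq_mul_inv] using this
    linarith
  calc (cnt x L s : ℝ) = (T.card : ℝ) := rfl
    _ ≤ (((L - 1) / m' + 1 : ℕ) : ℝ) := by exact_mod_cast Nat.cast_le.mpr (by simpa only [one_mul] using hcards : T.card ≤ (L - 1) / m' + 1)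
    _ ≤ (L : ℝ) / m' + 1 := hblocks

lemma cnt_zero (hx : Irrational x) (L : ℕ) (s : ℝ) (n : ℕ) (hL : L < rec x (n+1))
    (hs : s < dd x n) : cnt x L s = 0 := by
  classical
  rw [cnt, Finset.card_eq_zero]
  rw [Finset.filter_eq_empty_iff]
  intro l hl
  simp only [Finset.mem_Icc] at hl
  have := R1 hx n (by omega : 1 ≤ l) (by omega)
  push_neg
  linarith

/-- the uniform linear bound on bands below the top scale -/
lemma count12 (hx : Irrational x) (L : ℕ) (s : ℝ) (n : ℕ) (hs : 0 < s) (hL : 1 ≤ L)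
    (hδ : dd x n ≤ 2 * s) (hrec : rec x (n+1) ≤ L) :
    (cnt x L s : ℝ) ≤ 12 * s * L + 1 := by
  have hA := countA hx L s n hs hL hδ
  set m' := rec x (n+1) with hm'
  have hm'1 : 1 ≤ m' := rec_pos hx (n+1)
  have hm'0 : (0:ℝ) < (m' : ℝ) := by exact_mod_cast hm'1
  have hδ0 := dd_pos hx n
  have hge := dd_ge hx n
  rw [← hm'] at hge
  -- 1/(2 m') ≤ dd n  →  1/dd ≤ 2 m' and L/m' ≤ 2 L dd n ≤ 4 L s
  have hL0 : (0:ℝ) < (L:ℝ) := by exact_mod_cast hL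
  have hmL : (m' : ℝ) ≤ (L : ℝ) := by exact_mod_cast hrec
  have hinv : 1 / dd x n ≤ 2 * (m' : ℝ) := by
    rw [div_le_iff₀ hδ0]
    rw [div_le_iff₀ (by positivity)] at hge
    nlinarith
  have e1 : 2 * s / dd x n ≤ 4 * s * (m' : ℝ) := by
    rw [div_eq_mul_inv]
    have : (dd x n)⁻¹ ≤ 2 * (m' : ℝ) := by
      rw [← one_div]; exact hinv
    nlinarith
  have e2 : (L : ℝ) / (m' : ℝ) ≤ 2 * (L : ℝ) * dd x n := by
    rw [div_le_iff₀ hm'0]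
    rw [div_le_iff₀ (by positivity)] at hge
    nlinarith
  have e3 : (L : ℝ) / (m' : ℝ) ≤ 4 * s * (L : ℝ) := by
    calc (L : ℝ) / (m' : ℝ) ≤ 2 * (L : ℝ) * dd x n := e2
      _ ≤ 4 * s * (L:ℝ) := by nlinarith
  have e4 : 4 * s * (m' : ℝ) ≤ 4 * s * (L : ℝ) := by nlinarith
  have hd2s : (0:ℝ) ≤ 2 * s / dd x n := div_nonneg (by linarith) (le_of_lt hδ0)
  have hLm : (0:ℝ) ≤ (L:ℝ)/(m':ℝ) := by positivity
  calc (cnt x L s : ℝ) ≤ ((L : ℝ) / m' + 1) * (2 * s / dd x n + 1) := hA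
    _ = (L:ℝ)/m' * (2*s/dd x n) + (L:ℝ)/m' + (2*s/dd x n) + 1 := by ring
    _ ≤ (L:ℝ)/m' * (4*s*m') + (4*s*(L:ℝ)) + (4*s*(m':ℝ)) + 1 := by
        have c1 : (L:ℝ)/m' * (2*s/dd x n) ≤ (L:ℝ)/m' * (4*s*m') :=
          mul_le_mul_of_nonneg_left e1 hLm
        linarith
    _ = 4*s*(L:ℝ) * ((m':ℝ) * ((m':ℝ)⁻¹)) + (4*s*(L:ℝ)) + (4*s*(m':ℝ)) + 1 := by
        field_simp
    _ ≤ 12 * s * (L:ℝ) + 1 := by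
        rw [mul_inv_cancel₀ (ne_of_gt hm'0)]
        nlinarith
    _ = 12 * s * L + 1 := rfl


noncomputable def w (s : ℝ) : ℝ := s⁻¹ - (1 - s)⁻¹
noncomputable def G (s : ℝ) : ℝ := Real.log s + Real.log (1 - s)

lemma w_nonneg {s : ℝ} (h1 : 0 < s) (h2 : s ≤ 1/2) : 0 ≤ w s := by
  rw [w]
  have h3 : 0 < 1 - s := by linarith
  have h4 : s ≤ 1 - s := by linarith
  have := one_div_le_one_div_of_le h1 h4
  rw [one_div, one_div] at this
  linarith

lemma hasDerivAt_G {s : ℝ} (h1 : 0 < s) (h2 : s < 1) : HasDerivAt G (w s) s := by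
  have d1 : HasDerivAt Real.log s⁻¹ s := Real.hasDerivAt_log (ne_of_gt h1)
  have d2 : HasDerivAt (fun t : ℝ => 1 - t) (-1) s := by
    simpa using (hasDerivAt_id' s).const_sub (1:ℝ)
  have d3 : HasDerivAt (fun t : ℝ => Real.log (1 - t)) (-1 * (1 - s)⁻¹) s := by
    have := (Real.hasDerivAt_log (by linarith : (1:ℝ) - s ≠ 0)).comp s d2
    rw [mul_comm]; exact this
  have := (Real.hasDerivAt_log (ne_of_gt h1)).add d3
  rw [show w s = s⁻¹ + -1 * (1 - s)⁻¹ by rw [w]; ring]; exact this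

lemma w_contOn {a b : ℝ} (ha : 0 < a) (hb0 : 0 < b) (ha1 : a < 1) (hb1 : b < 1) :
    ContinuousOn w (Set.uIcc a b) := by
  have hsub : Set.uIcc a b ⊆ {s : ℝ | 0 < s ∧ s < 1} := by
    intro s hs
    rw [Set.mem_uIcc] at hs
    simp only [Set.mem_setOf_eq]
    constructor <;> rcases hs with ⟨h1, h2⟩ | ⟨h1, h2⟩ <;> linarith
  apply ContinuousOn.sub
  · apply ContinuousOn.inv₀ continuousOn_id
    intro s hs; exact ne_of_gt (hsub hs).1
  · apply ContinuousOn.inv₀ (by fun_prop)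
    intro s hs
    have h2 := (hsub hs).2
    intro h
    have : s = 1 := by linarith [sub_eq_zero.mp h]
    linarith

lemma w_intble {a b : ℝ} (ha : 0 < a) (hb0 : 0 < b) (ha1 : a < 1) (hb1 : b < 1) :
    IntervalIntegrable w MeasureTheory.volume a b :=
  (w_contOn ha hb0 ha1 hb1).intervalIntegrable

lemma integral_w {a b : ℝ} (ha : 0 < a) (hb0 : 0 < b) (ha1 : a < 1) (hb1 : b < 1) :
    ∫ s in a..b, w s = G b - G a := by
  apply intervalIntegral.integral_eq_sub_of_hasDerivAt
  · intro s hs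
    rw [Set.mem_uIcc] at hs
    have h1 : 0 < s := by rcases hs with ⟨h1, h2⟩ | ⟨h1, h2⟩ <;> linarith
    have h2 : s < 1 := by rcases hs with ⟨h1, h2⟩ | ⟨h1, h2⟩ <;> linarith
    exact hasDerivAt_G h1 h2
  · exact w_intble ha hb0 ha1 hb1


lemma round_floor_cases (y : ℝ) : round y = ⌊y⌋ ∨ round y = ⌊y⌋ + 1 := by
  rw [round_eq]
  have h1 : ⌊y⌋ ≤ ⌊y + 1/2⌋ := Int.floor_mono (by linarith)
  have h2 : ⌊y + 1/2⌋ ≤ ⌊y⌋ + 1 := by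
    have : ⌊y + 1⌋ = ⌊y⌋ + 1 := by
      have := Int.floor_add_intCast y 1
      simpa using this
    rw [← this]
    exact Int.floor_mono (by linarith)
  omega

lemma term_eq (y : ℝ) (hy : Irrational y) :
    -Real.log (Int.fract y) - Real.log (Int.fract (-y))
      = -Real.log (distZ y) - Real.log (1 - distZ y) := by
  have hu0 : Int.fract y ≠ 0 := by
    intro h
    exact (Irrational.ne_int hy ⌊y⌋) (by
      have : y - ⌊y⌋ = 0 := h
      linarith)
  have hneg : Int.fract (-y) = 1 - Int.fract y := Int.fract_neg hu0
  have hfr : Int.fract y = y - (⌊y⌋ : ℝ) := (Int.self_sub_floor y).symm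
  have hf0 : 0 ≤ Int.fract y := Int.fract_nonneg y
  have hf1 : Int.fract y < 1 := Int.fract_lt_one y
  rcases round_floor_cases y with h | h
  · have hd : distZ y = Int.fract y := by
      rw [distZ, h]
      rw [abs_of_nonneg (by rw [← Int.self_sub_floor] at hf0; exact hf0)]
      exact (Int.self_sub_floor y)
    rw [hd, hneg]
  · have hd : distZ y = 1 - Int.fract y := by
      rw [distZ, h]
      push_cast
      rw [abs_of_nonpos (by rw [hfr] at hf1; linarith)]
      rw [hfr]; ring
    rw [hd, hneg]
    ring_nf

lemma term_integral (d : ℝ) (hd0 : 0 < d) (hdh : d ≤ 1/2) :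
    -Real.log d - Real.log (1 - d) = 2 * Real.log 2 + ∫ s in d..(1/2 : ℝ), w s := by
  rw [integral_w hd0 (by norm_num) (by linarith) (by norm_num)]
  rw [G, G]
  have : Real.log (1/2 : ℝ) = - Real.log 2 := by
    rw [one_div, Real.log_inv]
  rw [this]
  have h2 : (1:ℝ) - 1/2 = 1/2 := by norm_num
  rw [h2, this]
  ring


-- lower bound for log(1-u)
lemma log_one_sub_ge {u : ℝ} (h0 : 0 ≤ u) (h : u ≤ 1/2) : -2*u ≤ Real.log (1 - u) := by
  have h1 : (0:ℝ) < 1 - u := by linarith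
  have h2 := Real.log_le_sub_one_of_pos (inv_pos.mpr h1)
  rw [Real.log_inv] at h2
  have h3 : (1 - u)⁻¹ ≤ 1 + 2*u := by
    rw [inv_le_iff_one_le_mul₀ h1]
    nlinarith
  linarith

lemma G_le {s : ℝ} (h0 : 0 < s) (h : s ≤ 1/2) : G s ≤ - Real.log 2 := by
  rw [G]
  have h1 : Real.log s ≤ Real.log (1/2) := Real.log_le_log h0 h
  have h2 : Real.log (1 - s) ≤ 0 := Real.log_nonpos (by linarith) (by linarith)
  rw [one_div, Real.log_inv] at h1
  linarith

lemma G_ge {s : ℝ} (h0 : 0 < s) (h : s ≤ 1/2) : Real.log s - Real.log 2 ≤ G s := by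
  rw [G]
  have h1 : Real.log (1/2) ≤ Real.log (1 - s) := Real.log_le_log (by norm_num) (by linarith)
  rw [one_div, Real.log_inv] at h1
  linarith

lemma G_mono {a b : ℝ} (ha : 0 < a) (hab : a ≤ b) (hb : b ≤ 1/2) : G a ≤ G b := by
  have h := integral_w ha (by linarith) (by linarith) (by linarith)
  have hnn : 0 ≤ ∫ s in a..b, w s := by
    apply intervalIntegral.integral_nonneg hab
    intro s hs
    exact w_nonneg (by linarith [hs.1]) (by linarith [hs.2])
  linarith [h ▸ hnn]

set_option maxHeartbeats 1600000 in
/-- The master estimate. -/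
lemma main_bound (hx : Irrational x) (L J : ℕ) (hL : 1 ≤ L)
    (hrecL : rec x (J+1) ≤ L) (hLrec : L < rec x (J+2)) :
    ∑ l ∈ Finset.Icc 1 L,
        (-Real.log (Int.fract ((l : ℝ) * x)) - Real.log (Int.fract (-((l : ℝ) * x))))
      ≤ (L:ℝ) * (2*Real.log 2 + 12*(1/6 + Real.log (11/12)) + (G (1/2) - G (1/12)))
        + ((L:ℝ)/(rec x (J+1)) + 2) * Real.log (dd x (J+1))⁻¹ := by
  classical
  set t₀ := dd x (J+1) with ht₀
  set bb := dd x J / 2 with hbb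
  have ht₀0 : 0 < t₀ := dd_pos hx (J+1)
  have ht₀h : t₀ ≤ 1/2 := dd_le_half (J+1)
  have hbb0 : 0 < bb := by have := dd_pos hx J; rw [hbb]; linarith
  set d : ℕ → ℝ := fun l => distZ ((l : ℝ) * x) with hd
  have hdmem : ∀ l ∈ Finset.Icc 1 L, t₀ ≤ d l ∧ 0 < d l ∧ d l ≤ 1/2 := by
    intro l hl
    simp only [Finset.mem_Icc] at hl
    refine ⟨?_, distZ_pos (hx.natCast_mul (by omega)), distZ_le_half _⟩
    have hre : rec x (J+1+1) = rec x (J+2) := rfl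
    exact R1 hx (J+1) (by omega) (by omega)
  -- step 1 : rewrite sum
  have step1 : ∑ l ∈ Finset.Icc 1 L,
      (-Real.log (Int.fract ((l : ℝ) * x)) - Real.log (Int.fract (-((l : ℝ) * x))))
      = (L:ℝ) * (2*Real.log 2) + ∑ l ∈ Finset.Icc 1 L, ∫ s in (d l)..(1/2:ℝ), w s := by
    have h1 : ∀ l ∈ Finset.Icc 1 L,
        -Real.log (Int.fract ((l : ℝ) * x)) - Real.log (Int.fract (-((l : ℝ) * x)))
          = 2 * Real.log 2 + ∫ s in (d l)..(1/2:ℝ), w s := by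
      intro l hl
      obtain ⟨hm1, hm2, hm3⟩ := hdmem l hl
      rw [term_eq _ (hx.natCast_mul (by simp only [Finset.mem_Icc] at hl; omega))]
      exact term_integral (d l) hm2 hm3
    calc ∑ l ∈ Finset.Icc 1 L,
        (-Real.log (Int.fract ((l : ℝ) * x)) - Real.log (Int.fract (-((l : ℝ) * x))))
        = ∑ l ∈ Finset.Icc 1 L, (2 * Real.log 2 + ∫ s in (d l)..(1/2:ℝ), w s) :=
          Finset.sum_congr rfl h1
      _ = _ := by
          rw [Finset.sum_add_distrib, Finset.sum_const, Nat.card_Icc]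
          simp only [Nat.add_sub_cancel, nsmul_eq_mul]
  -- integrability of w on Ioc t₀ (1/2)
  have hwIcc : IntegrableOn w (Set.Icc t₀ (1/2:ℝ)) volume := by
    have hco := w_contOn ht₀0 (by norm_num : (0:ℝ) < 1/2) (by linarith) (by norm_num)
    rw [Set.uIcc_of_le ht₀h] at hco
    exact hco.integrableOn_Icc
  have hwint : IntegrableOn w (Set.Ioc t₀ (1/2:ℝ)) volume :=
    hwIcc.mono_set Set.Ioc_subset_Icc_self
  -- step 2 : interchange
  have step2 : ∑ l ∈ Finset.Icc 1 L, ∫ s in (d l)..(1/2:ℝ), w s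
      = ∫ s in Set.Ioc t₀ (1/2:ℝ),
          (∑ l ∈ Finset.Icc 1 L, Set.indicator (Set.Ioi (d l)) w s) := by
    rw [MeasureTheory.integral_finset_sum]
    · apply Finset.sum_congr rfl
      intro l hl
      obtain ⟨hm1, hm2, hm3⟩ := hdmem l hl
      have hseteq : Set.Ioc t₀ (1/2:ℝ) ∩ Set.Ioi (d l) = Set.Ioc (d l) (1/2:ℝ) := by
        ext s
        simp only [Set.mem_inter_iff, Set.mem_Ioc, Set.mem_Ioi]
        constructor
        · rintro ⟨⟨hsa, hsb⟩, hsc⟩; exact ⟨hsc, hsb⟩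
        · rintro ⟨hsa, hsb⟩; exact ⟨⟨lt_of_le_of_lt hm1 hsa, hsb⟩, hsa⟩
      rw [intervalIntegral.integral_of_le hm3,
        MeasureTheory.setIntegral_indicator measurableSet_Ioi, hseteq]
    · intro l _
      exact hwint.indicator measurableSet_Ioi
  -- step 3 : pointwise bound
  set cB : ℝ := (L:ℝ)/(rec x (J+1)) + 1 with hcB
  have hcB0 : 0 ≤ cB := by
    rw [hcB]
    have h1 : (0:ℝ) < (rec x (J+1) : ℝ) := by exact_mod_cast rec_pos hx (J+1)
    positivity
  set φ1 : ℝ → ℝ := fun s => Set.indicator (Set.Iio bb) (fun s => cB * w s) s with hφ1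
  set φ2 : ℝ → ℝ := fun s => min (L:ℝ) (12*s*(L:ℝ)) * w s with hφ2
  have hcnt12 : ∀ s : ℝ, t₀ < s → s ≤ 1/2 → ¬ (s < bb) → (cnt x L s : ℝ) ≤ min (L:ℝ) (12*s*(L:ℝ)) + 1 := by
    intro s hs1 hs2 hs3
    push_neg at hs3
    have hs0 : 0 < s := lt_trans ht₀0 hs1
    have hc12 := count12 hx L s J hs0 hL (by rw [hbb] at hs3; linarith) hrecL
    have hcL : (cnt x L s : ℝ) ≤ (L:ℝ) := by exact_mod_cast cnt_le x L s
    rcases le_total (L:ℝ) (12*s*(L:ℝ)) with h | h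
    · rw [min_eq_left h]; linarith
    · rw [min_eq_right h]; linarith
  have step3 : ∀ s ∈ Set.Ioc t₀ (1/2:ℝ),
      (∑ l ∈ Finset.Icc 1 L, Set.indicator (Set.Ioi (d l)) w s) ≤ φ1 s + φ2 s + w s := by
    intro s hs
    obtain ⟨hs1, hs2⟩ := hs
    have hs0 : 0 < s := lt_trans ht₀0 hs1
    have hw0 : 0 ≤ w s := w_nonneg hs0 hs2
    have hsum : (∑ l ∈ Finset.Icc 1 L, Set.indicator (Set.Ioi (d l)) w s)
        = (((Finset.Icc 1 L).filter (fun l : ℕ => d l < s)).card : ℝ) * w s := by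
      have h1 : ∀ l ∈ Finset.Icc 1 L,
          Set.indicator (Set.Ioi (d l)) w s = if d l < s then w s else 0 := by
        intro l _
        rw [Set.indicator_apply]
        simp only [Set.mem_Ioi]
      rw [Finset.sum_congr rfl h1, Finset.sum_ite, Finset.sum_const, Finset.sum_const_zero,
        add_zero, nsmul_eq_mul]
    rw [hsum]
    have hcard : (((Finset.Icc 1 L).filter (fun l : ℕ => d l < s)).card : ℝ) ≤ (cnt x L s : ℝ) := by
      have : ((Finset.Icc 1 L).filter (fun l : ℕ => d l < s))
          ⊆ ((Finset.Icc 1 L).filter (fun l : ℕ => distZ ((l : ℝ) * x) ≤ s)) := by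
        intro a ha
        simp only [Finset.mem_filter] at *
        exact ⟨ha.1, le_of_lt ha.2⟩
      exact_mod_cast Nat.cast_le.mpr (Finset.card_le_card this)
    by_cases hcase : s < bb
    · have hB := countB hx L s J hs0 (by rw [hbb] at hcase; linarith)
      have hmin0 : 0 ≤ min (L:ℝ) (12*s*(L:ℝ)) := by
        apply le_min (by positivity) (by positivity)
      have hind : φ1 s = cB * w s := Set.indicator_of_mem (Set.mem_Iio.mpr hcase) _
      rw [hind, hφ2]
      simp only
      have : (((Finset.Icc 1 L).filter (fun l : ℕ => d l < s)).card : ℝ) * w s ≤ cB * w s := by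
        apply mul_le_mul_of_nonneg_right _ hw0
        calc (((Finset.Icc 1 L).filter (fun l : ℕ => d l < s)).card : ℝ)
            ≤ (cnt x L s : ℝ) := hcard
          _ ≤ cB := by rw [hcB]; exact hB
      nlinarith [mul_nonneg hmin0 hw0]
    · have h12 := hcnt12 s hs1 hs2 hcase
      have hind : φ1 s = 0 :=
        Set.indicator_of_notMem (by simpa [Set.mem_Iio] using hcase) _
      rw [hind, hφ2]
      simp only
      have : (((Finset.Icc 1 L).filter (fun l : ℕ => d l < s)).card : ℝ) * w s
          ≤ (min (L:ℝ) (12*s*(L:ℝ)) + 1) * w s := by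
        apply mul_le_mul_of_nonneg_right _ hw0
        exact le_trans hcard h12
      nlinarith
  -- integrability of φ
  have hφ1int : IntegrableOn φ1 (Set.Ioc t₀ (1/2:ℝ)) volume := by
    exact (hwint.const_mul cB).indicator measurableSet_Iio
  have hminwco : ContinuousOn (fun s : ℝ => min (L:ℝ) (12*s*(L:ℝ)) * w s) (Set.Icc t₀ (1/2:ℝ)) := by
    apply ContinuousOn.mul
    · exact (continuous_const.min (by fun_prop)).continuousOn
    · have := w_contOn ht₀0 (by norm_num : (0:ℝ) < 1/2) (by linarith) (by norm_num)
      rwa [Set.uIcc_of_le ht₀h] at this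
  have hφ2int : IntegrableOn φ2 (Set.Ioc t₀ (1/2:ℝ)) volume :=
    hminwco.integrableOn_Icc.mono_set Set.Ioc_subset_Icc_self
  have hφint : IntegrableOn (fun s => φ1 s + φ2 s + w s) (Set.Ioc t₀ (1/2:ℝ)) volume := by
    exact (hφ1int.add hφ2int).add hwint
  have hΦint : IntegrableOn (fun s => ∑ l ∈ Finset.Icc 1 L, Set.indicator (Set.Ioi (d l)) w s)
      (Set.Ioc t₀ (1/2:ℝ)) volume := by
    apply MeasureTheory.integrable_finset_sum
    intro l _
    exact hwint.indicator measurableSet_Ioi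
  -- step 4 : integral monotone
  have step4 : ∫ s in Set.Ioc t₀ (1/2:ℝ),
      (∑ l ∈ Finset.Icc 1 L, Set.indicator (Set.Ioi (d l)) w s)
      ≤ ∫ s in Set.Ioc t₀ (1/2:ℝ), (φ1 s + φ2 s + w s) :=
    MeasureTheory.setIntegral_mono_on hΦint hφint measurableSet_Ioc step3
  -- step 5 : split φ integral
  have step5 : ∫ s in Set.Ioc t₀ (1/2:ℝ), (φ1 s + φ2 s + w s)
      = (∫ s in Set.Ioc t₀ (1/2:ℝ), φ1 s)
        + (∫ s in Set.Ioc t₀ (1/2:ℝ), φ2 s)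
          + ∫ s in Set.Ioc t₀ (1/2:ℝ), w s := by
    have h12 : IntegrableOn (fun s => φ1 s + φ2 s) (Set.Ioc t₀ (1/2:ℝ)) volume :=
      hφ1int.add hφ2int
    rw [MeasureTheory.integral_add h12 hwint, MeasureTheory.integral_add hφ1int hφ2int]
  -- log t₀⁻¹ basics
  have hlogeq : Real.log t₀⁻¹ = - Real.log t₀ := Real.log_inv t₀
  have hlogt0 : 0 ≤ Real.log t₀⁻¹ := by
    rw [hlogeq]
    have := Real.log_nonpos (le_of_lt ht₀0) (by linarith : t₀ ≤ 1)
    linarith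
  -- piece B
  have hpieceB : ∫ s in Set.Ioc t₀ (1/2:ℝ), φ1 s ≤ cB * Real.log t₀⁻¹ := by
    rw [hφ1]
    rw [MeasureTheory.setIntegral_indicator measurableSet_Iio]
    rw [MeasureTheory.integral_const_mul]
    apply mul_le_mul_of_nonneg_left _ hcB0
    set b' := min bb (1/2:ℝ) with hb'
    have hb'0 : 0 < b' := lt_min hbb0 (by norm_num)
    have hb'h : b' ≤ 1/2 := min_le_right _ _
    have hsub : Set.Ioc t₀ (1/2:ℝ) ∩ Set.Iio bb ⊆ Set.Ioc t₀ b' := by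
      rintro s ⟨⟨hs1, hs2⟩, hs3⟩
      simp only [Set.mem_Iio] at hs3
      exact ⟨hs1, le_min (le_of_lt hs3) hs2⟩
    have hint' : IntegrableOn w (Set.Ioc t₀ b') volume := by
      apply hwIcc.mono_set
      rintro s ⟨hs1, hs2⟩
      exact ⟨le_of_lt hs1, le_trans hs2 hb'h⟩
    have hae : 0 ≤ᵐ[MeasureTheory.volume.restrict (Set.Ioc t₀ b')] w := by
      apply MeasureTheory.ae_restrict_of_forall_mem measurableSet_Ioc
      rintro s ⟨hs1, hs2⟩
      exact w_nonneg (lt_trans ht₀0 hs1) (le_trans hs2 hb'h)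
    have hmono := MeasureTheory.setIntegral_mono_set hint' hae
      (HasSubset.Subset.eventuallyLE hsub)
    refine le_trans hmono ?_
    rcases le_or_gt t₀ b' with hcase | hcase
    · rw [← intervalIntegral.integral_of_le hcase,
        integral_w ht₀0 hb'0 (by linarith) (by linarith)]
      have h1 := G_le hb'0 hb'h
      have h2 := G_ge ht₀0 ht₀h
      rw [hlogeq]
      linarith
    · rw [Set.Ioc_eq_empty (not_lt.mpr (le_of_lt hcase)), MeasureTheory.setIntegral_empty]
      exact hlogt0
  -- piece w
  have hpiecew : ∫ s in Set.Ioc t₀ (1/2:ℝ), w s ≤ Real.log t₀⁻¹ := by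
    rw [← intervalIntegral.integral_of_le ht₀h,
      integral_w ht₀0 (by norm_num) (by linarith) (by norm_num)]
    have h1 := G_le (by norm_num : (0:ℝ) < 1/2) (le_refl _)
    have h2 := G_ge ht₀0 ht₀h
    rw [hlogeq]
    linarith
  -- piece min
  set c : ℝ := max t₀ (1/12:ℝ) with hc
  have hc1 : t₀ ≤ c := le_max_left _ _
  have hc2 : c ≤ 1/2 := max_le ht₀h (by norm_num)
  have hc0 : 0 < c := lt_of_lt_of_le ht₀0 hc1
  have hc112 : 1/12 ≤ c := le_max_right _ _
  have hφ2int1 : IntervalIntegrable φ2 MeasureTheory.volume t₀ c := by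
    apply ContinuousOn.intervalIntegrable
    apply hminwco.mono
    rw [Set.uIcc_of_le hc1]
    intro s hs
    exact ⟨hs.1, le_trans hs.2 hc2⟩
  have hφ2int2 : IntervalIntegrable φ2 MeasureTheory.volume c (1/2:ℝ) := by
    apply ContinuousOn.intervalIntegrable
    apply hminwco.mono
    rw [Set.uIcc_of_le hc2]
    intro s hs
    exact ⟨le_trans hc1 hs.1, hs.2⟩
  have hsplitφ2 : ∫ s in Set.Ioc t₀ (1/2:ℝ), φ2 s
      = (∫ s in t₀..c, φ2 s) + ∫ s in c..(1/2:ℝ), φ2 s := by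
    rw [← intervalIntegral.integral_of_le ht₀h]
    rw [intervalIntegral.integral_add_adjacent_intervals hφ2int1 hφ2int2]
  set ψ : ℝ → ℝ := fun s => 12*(L:ℝ)*(2 - (1-s)⁻¹) with hψ
  have hψco : ContinuousOn ψ (Set.uIcc t₀ c) := by
    rw [Set.uIcc_of_le hc1]
    apply ContinuousOn.mul continuousOn_const
    apply ContinuousOn.sub continuousOn_const
    apply ContinuousOn.inv₀ (by fun_prop)
    intro s hs
    have h1 : s ≤ 1/2 := le_trans hs.2 hc2
    intro hzero
    have : s = 1 := by linarith [sub_eq_zero.mp hzero]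
    linarith
  have hL0 : (0:ℝ) ≤ (L:ℝ) := Nat.cast_nonneg L
  have hpa : ∫ s in t₀..c, φ2 s ≤ 12*(L:ℝ)*(1/6 + Real.log (11/12)) := by
    have hmono : ∫ s in t₀..c, φ2 s ≤ ∫ s in t₀..c, ψ s := by
      apply intervalIntegral.integral_mono_on hc1 hφ2int1 hψco.intervalIntegrable
      intro s hs
      have hs0 : 0 < s := lt_of_lt_of_le ht₀0 hs.1
      have hsh : s ≤ 1/2 := le_trans hs.2 hc2
      have hws : 0 ≤ w s := w_nonneg hs0 hsh
      have h1 : φ2 s ≤ 12*s*(L:ℝ) * w s :=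
        mul_le_mul_of_nonneg_right (min_le_right _ _) hws
      have h2 : 12*s*(L:ℝ) * w s = ψ s := by
        rw [hψ, w]
        simp only
        have hs1 : s ≠ 0 := ne_of_gt hs0
        have hs2 : (1:ℝ) - s ≠ 0 := by
          intro hzero
          have : s = 1 := by linarith [sub_eq_zero.mp hzero]
          linarith
        field_simp
        ring
      linarith
    have hftc : ∫ s in t₀..c, ψ s
        = 12*(L:ℝ)*(2*c + Real.log (1-c)) - 12*(L:ℝ)*(2*t₀ + Real.log (1-t₀)) := by
      have : ∀ s ∈ Set.uIcc t₀ c,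
          HasDerivAt (fun u => 12*(L:ℝ)*(2*u + Real.log (1-u))) (ψ s) s := by
        intro s hs
        rw [Set.uIcc_of_le hc1] at hs
        have hsh : s ≤ 1/2 := le_trans hs.2 hc2
        have h1s : (0:ℝ) < 1 - s := by linarith
        have d2 : HasDerivAt (fun u : ℝ => 1 - u) (-1) s := by
          simpa using (hasDerivAt_id' s).const_sub (1:ℝ)
        have d3 : HasDerivAt (fun u : ℝ => Real.log (1 - u)) (-1 * (1 - s)⁻¹) s := by
          have := (Real.hasDerivAt_log (ne_of_gt h1s)).comp s d2
          rw [mul_comm]; exact this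
        have d4 : HasDerivAt (fun u : ℝ => 2*u) (2:ℝ) s := by
          simpa using (hasDerivAt_id s).const_mul (2:ℝ)
        have d5 := (d4.add d3).const_mul (12*(L:ℝ))
        have : ψ s = 12*(L:ℝ)*(2 + -1 * (1-s)⁻¹) := by rw [hψ]; ring_nf
        rw [this]
        exact d5
      rw [intervalIntegral.integral_eq_sub_of_hasDerivAt this hψco.intervalIntegrable]
    have hval : 12*(L:ℝ)*(2*c + Real.log (1-c)) - 12*(L:ℝ)*(2*t₀ + Real.log (1-t₀))
        ≤ 12*(L:ℝ)*(1/6 + Real.log (11/12)) := by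
      rcases le_or_gt t₀ (1/12:ℝ) with hcase | hcase
      · have hceq : c = 1/12 := by rw [hc]; exact max_eq_right hcase
        rw [hceq]
        have h1 : (1:ℝ) - 1/12 = 11/12 := by norm_num
        rw [h1]
        have h2 : -2*t₀ ≤ Real.log (1-t₀) := log_one_sub_ge (le_of_lt ht₀0) ht₀h
        nlinarith
      · have hceq : c = t₀ := by rw [hc]; exact max_eq_left (le_of_lt hcase)
        rw [hceq]
        have h2 : -2*(1/12:ℝ) ≤ Real.log (1-1/12) := log_one_sub_ge (by norm_num) (by norm_num)
        have h3 : (1:ℝ) - 1/12 = 11/12 := by norm_num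
        rw [h3] at h2
        nlinarith
    linarith
  have hpb : ∫ s in c..(1/2:ℝ), φ2 s ≤ (L:ℝ) * (G (1/2) - G (1/12)) := by
    have hLwint : IntervalIntegrable (fun s => (L:ℝ) * w s) MeasureTheory.volume c (1/2:ℝ) :=
      (w_intble hc0 (by norm_num) (by linarith) (by norm_num)).const_mul _
    have hmono : ∫ s in c..(1/2:ℝ), φ2 s ≤ ∫ s in c..(1/2:ℝ), (L:ℝ) * w s := by
      apply intervalIntegral.integral_mono_on hc2 hφ2int2 hLwint
      intro s hs
      have hs0 : 0 < s := lt_of_lt_of_le hc0 hs.1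
      have hws : 0 ≤ w s := w_nonneg hs0 hs.2
      exact mul_le_mul_of_nonneg_right (min_le_left _ _) hws
    have heval : ∫ s in c..(1/2:ℝ), (L:ℝ) * w s = (L:ℝ) * (G (1/2) - G c) := by
      rw [intervalIntegral.integral_const_mul,
        integral_w hc0 (by norm_num) (by linarith) (by norm_num)]
    have hGc : G (1/12) ≤ G c := G_mono (by norm_num) hc112 hc2
    calc ∫ s in c..(1/2:ℝ), φ2 s ≤ (L:ℝ) * (G (1/2) - G c) := by rw [← heval]; exact hmono
      _ ≤ (L:ℝ) * (G (1/2) - G (1/12)) := by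
          apply mul_le_mul_of_nonneg_left _ hL0
          linarith
  -- combine
  have hfinal := calc
    ∑ l ∈ Finset.Icc 1 L,
        (-Real.log (Int.fract ((l : ℝ) * x)) - Real.log (Int.fract (-((l : ℝ) * x))))
      = (L:ℝ) * (2*Real.log 2) + ∑ l ∈ Finset.Icc 1 L, ∫ s in (d l)..(1/2:ℝ), w s := step1
    _ = (L:ℝ) * (2*Real.log 2) + ∫ s in Set.Ioc t₀ (1/2:ℝ),
          (∑ l ∈ Finset.Icc 1 L, Set.indicator (Set.Ioi (d l)) w s) := by rw [step2]
    _ ≤ (L:ℝ) * (2*Real.log 2) + ((∫ s in Set.Ioc t₀ (1/2:ℝ), φ1 s)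
        + (∫ s in Set.Ioc t₀ (1/2:ℝ), φ2 s) + ∫ s in Set.Ioc t₀ (1/2:ℝ), w s) := by
          have := le_trans step4 (le_of_eq step5)
          linarith
    _ ≤ (L:ℝ) * (2*Real.log 2) + (cB * Real.log t₀⁻¹
        + (12*(L:ℝ)*(1/6 + Real.log (11/12)) + (L:ℝ) * (G (1/2) - G (1/12)))
        + Real.log t₀⁻¹) := by
          have := hsplitφ2
          linarith
  calc ∑ l ∈ Finset.Icc 1 L,
      (-Real.log (Int.fract ((l : ℝ) * x)) - Real.log (Int.fract (-((l : ℝ) * x)))) ≤ _ := hfinal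
    _ = (L:ℝ) * (2*Real.log 2 + 12*(1/6 + Real.log (11/12)) + (G (1/2) - G (1/12)))
        + ((L:ℝ)/(rec x (J+1)) + 2) * Real.log (dd x (J+1))⁻¹ := by
        rw [hcB, ht₀]
        ring

lemma K0_le : 2*Real.log 2 + 12*(1/6 + Real.log (11/12)) + (G (1/2:ℝ) - G (1/12:ℝ)) ≤ 3.95 := by
  have hhalf : Real.log (1/2:ℝ) = - Real.log 2 := by
    rw [one_div, Real.log_inv]
  have h12 : Real.log (1/12:ℝ) = - Real.log 12 := by
    rw [one_div, Real.log_inv]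
  have eG2 : G (1/2:ℝ) = -2 * Real.log 2 := by
    have h : G (1/2:ℝ) = Real.log (1/2) + Real.log (1/2) := by rw [G]; norm_num
    rw [h, hhalf]; ring
  have eG12 : G (1/12:ℝ) = - Real.log 12 + Real.log (11/12) := by
    have h : G (1/12:ℝ) = Real.log (1/12) + Real.log (11/12) := by rw [G]; norm_num
    rw [h, h12]
  have hu : Real.log (11/12:ℝ) ≤ -1/12 := by
    have := Real.log_le_sub_one_of_pos (show (0:ℝ) < 11/12 by norm_num)
    linarith
  have hexp2 : (7.389:ℝ) < Real.exp 2 := by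
    have h1 := Real.exp_one_gt_d9
    have h2 : Real.exp 2 = Real.exp 1 * Real.exp 1 := by
      rw [← Real.exp_add]; norm_num
    nlinarith
  have hv : Real.log 12 ≤ 2 + (12 / Real.exp 2 - 1) := by
    have h := Real.log_le_sub_one_of_pos (show (0:ℝ) < 12 / Real.exp 2 by positivity)
    rw [Real.log_div (by norm_num) (Real.exp_ne_zero 2), Real.log_exp] at h
    linarith
  have hv2 : 12 / Real.exp 2 ≤ 12 / 7.389 := by
    apply div_le_div_of_nonneg_left (by norm_num) (by norm_num) (le_of_lt hexp2)
  have hv3 : (12:ℝ)/7.389 ≤ 1.6242 := by norm_num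
  rw [eG2, eG12]
  nlinarith

theorem key (x : ℝ) (hx : Irrational x) : Csup x ≤ 4 + 4 * Bsup x := by
  rcases eq_or_ne (Bsup x) ⊤ with hB | hB
  · rw [hB]
    have : (4:ℝ≥0∞) * ⊤ = ⊤ := by simp
    rw [this]
    simp
  · set b := (Bsup x).toReal with hbdef
    have hb0 : 0 ≤ b := ENNReal.toReal_nonneg
    have hBb : Bsup x = ENNReal.ofReal b := (ENNReal.ofReal_toReal hB).symm
    have hev : ∀ᶠ q : ℕ in atTop, Real.log (distZ ((q:ℝ)*x))⁻¹ / q < b + 1/100 := by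
      have h1 : Bsup x < ENNReal.ofReal (b + 1/100) := by
        rw [hBb]
        exact (ENNReal.ofReal_lt_ofReal_iff (by linarith)).mpr (by linarith)
      have h2 := Filter.eventually_lt_of_limsup_lt h1
      filter_upwards [h2] with q hq
      by_contra hcon
      push_neg at hcon
      have := ENNReal.ofReal_le_ofReal hcon
      exact absurd hq (not_lt.mpr this)
    obtain ⟨Q₁, hQ₁⟩ := Filter.eventually_atTop.mp hev
    set Q₀ := max Q₁ 1 with hQ₀
    have hQne : (Finset.Icc 1 Q₀).Nonempty := ⟨1, Finset.mem_Icc.mpr (by omega)⟩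
    set C : ℝ := max 0 ((Finset.Icc 1 Q₀).sup' hQne
      (fun q : ℕ => Real.log (distZ ((q:ℝ)*x))⁻¹)) with hC
    have hC0 : 0 ≤ C := le_max_left _ _
    have hmaster : ∀ q : ℕ, 1 ≤ q →
        Real.log (distZ ((q:ℝ)*x))⁻¹ ≤ (b + 1/100) * q + C := by
      intro q hq
      rcases le_or_gt q Q₀ with h | h
      · have h1 : Real.log (distZ ((q:ℝ)*x))⁻¹
            ≤ (Finset.Icc 1 Q₀).sup' hQne (fun q : ℕ => Real.log (distZ ((q:ℝ)*x))⁻¹) :=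
          Finset.le_sup' (fun q : ℕ => Real.log (distZ ((q:ℝ)*x))⁻¹)
            (Finset.mem_Icc.mpr ⟨hq, h⟩)
        have h2 : (0:ℝ) ≤ (b + 1/100) * q := by positivity
        have h3 : Real.log (distZ ((q:ℝ)*x))⁻¹ ≤ C := le_trans h1 (le_max_right _ _)
        linarith
      · have hq1 : Q₁ ≤ q := by omega
        have := hQ₁ q hq1
        have hq0 : (0:ℝ) < (q:ℝ) := by exact_mod_cast hq
        rw [div_lt_iff₀ hq0] at this
        linarith
    -- eventual L bound
    set N : ℕ := ⌈(100:ℝ)*C⌉₊ + 1 with hN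
    set L₀ : ℕ := max (rec x N) (⌈(200:ℝ)*C⌉₊ + 1) with hL₀
    have hevL : ∀ᶠ L : ℕ in atTop, ENNReal.ofReal ((1 / (L : ℝ)) *
        ∑ l ∈ Finset.Icc 1 L,
          (-Real.log (Int.fract ((l : ℝ) * x)) - Real.log (Int.fract (-((l : ℝ) * x)))))
        ≤ ENNReal.ofReal (4 + 3*b) := by
      rw [Filter.eventually_atTop]
      refine ⟨L₀, fun L hLL₀ => ?_⟩
      have hL1 : 1 ≤ L := by
        have h1 : 1 ≤ rec x N := rec_pos hx N
        have := le_max_left (rec x N) (⌈(200:ℝ)*C⌉₊ + 1)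
        omega
      -- findGreatest setup
      set I : ℕ := Nat.findGreatest (fun n => rec x n ≤ L) L with hI
      have hNrec : rec x N ≤ L := le_trans (le_max_left _ _) hLL₀
      have hNleL : N ≤ L := by
        have := rec_ge hx N
        omega
      have hIN : N ≤ I := Nat.le_findGreatest hNleL hNrec
      have hI1 : 1 ≤ I := by
        have h1 : 1 ≤ N := by rw [hN]; omega
        omega
      have hPI : rec x I ≤ L := by
        have h := Nat.findGreatest_spec (P := fun n => rec x n ≤ L) (m := N) hNleL hNrec
        rw [← hI] at h
        exact h
      have hPI1 : L < rec x (I + 1) := by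
        rcases le_or_gt (I+1) L with h | h
        · by_contra hcon
          push_neg at hcon
          have hgt : Nat.findGreatest (fun n => rec x n ≤ L) L < I + 1 := by omega
          exact Nat.findGreatest_is_greatest (P := fun n => rec x n ≤ L) hgt h hcon
        · have := rec_ge hx (I+1)
          omega
      set J : ℕ := I - 1 with hJ
      have hJI : J + 1 = I := by omega
      have hmb := main_bound hx L J hL1 (by rw [hJI]; exact hPI)
        (by have : J + 2 = I + 1 := by omega
            rw [this]; exact hPI1)
      set m : ℕ := rec x (J+1) with hm
      have hm1 : 1 ≤ m := rec_pos hx (J+1)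
      have hm0 : (0:ℝ) < (m:ℝ) := by exact_mod_cast hm1
      have hmL : (m:ℝ) ≤ (L:ℝ) := by
        rw [hm, hJI]; exact_mod_cast hPI
      have hmN : (rec x N : ℕ) ≤ m := by
        rw [hm, hJI]
        rcases Nat.eq_or_lt_of_le hIN with h | h
        · rw [h]
        · exact le_of_lt (rec_strictMono hx h)
      have hmbig : (100:ℝ)*C ≤ (m:ℝ) := by
        have h1 : ((100:ℝ)*C) ≤ (⌈(100:ℝ)*C⌉₊ : ℝ) := Nat.le_ceil _
        have h2 : (⌈(100:ℝ)*C⌉₊ : ℕ) + 1 ≤ rec x N := by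
          rw [← hN]; exact le_trans (by omega) (rec_ge hx N)
        have h3 : (rec x N : ℝ) ≤ (m:ℝ) := by exact_mod_cast hmN
        have h4 : ((⌈(100:ℝ)*C⌉₊ : ℕ) : ℝ) + 1 ≤ (rec x N : ℝ) := by exact_mod_cast h2
        linarith
      have hLbig : (200:ℝ)*C ≤ (L:ℝ) := by
        have h1 : ((200:ℝ)*C) ≤ (⌈(200:ℝ)*C⌉₊ : ℝ) := Nat.le_ceil _
        have h2 : (⌈(200:ℝ)*C⌉₊ + 1 : ℕ) ≤ L := le_trans (le_max_right _ _) hLL₀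
        have h3 : ((⌈(200:ℝ)*C⌉₊ + 1 : ℕ) : ℝ) ≤ (L:ℝ) := by exact_mod_cast h2
        push_cast at h3
        linarith
      -- bound the log term
      have hlog : Real.log (dd x (J+1))⁻¹ ≤ (b + 1/100) * m + C := by
        rw [dd_def]
        exact hmaster m hm1
      have hlognn : ((L:ℝ)/(m:ℝ) + 2) ≥ 0 := by positivity
      have hK0 := K0_le
      have hL0' : (0:ℝ) < (L:ℝ) := by exact_mod_cast hL1
      -- final real estimate
      have hsum : ∑ l ∈ Finset.Icc 1 L,
          (-Real.log (Int.fract ((l : ℝ) * x)) - Real.log (Int.fract (-((l : ℝ) * x))))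
          ≤ (L:ℝ) * (4 + 3*b) := by
        have h1 : ((L:ℝ)/(m:ℝ) + 2) * Real.log (dd x (J+1))⁻¹
            ≤ ((L:ℝ)/(m:ℝ) + 2) * ((b + 1/100) * m + C) := by
          apply mul_le_mul_of_nonneg_left hlog hlognn
        have h2 : ((L:ℝ)/(m:ℝ) + 2) * ((b + 1/100) * m + C)
            = (b + 1/100) * ((L:ℝ) * ((m:ℝ) * (m:ℝ)⁻¹)) + C * ((L:ℝ)/(m:ℝ))
              + 2*(b+1/100)*(m:ℝ) + 2*C := by
          field_simp
          ring
        rw [mul_inv_cancel₀ (ne_of_gt hm0), mul_one] at h2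
        have h3 : C * ((L:ℝ)/(m:ℝ)) ≤ (L:ℝ)/100 := by
          calc C * ((L:ℝ)/(m:ℝ)) ≤ ((m:ℝ)/100) * ((L:ℝ)/(m:ℝ)) := by
                apply mul_le_mul_of_nonneg_right _ (by positivity)
                linarith
            _ = (L:ℝ) * (1/100) * ((m:ℝ) * (m:ℝ)⁻¹) := by ring
            _ = (L:ℝ) * (1/100) := by rw [mul_inv_cancel₀ (ne_of_gt hm0), mul_one]
            _ = (L:ℝ)/100 := by ring
        have h4 : 2*(b+1/100)*(m:ℝ) ≤ 2*(b+1/100)*(L:ℝ) := by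
          apply mul_le_mul_of_nonneg_left hmL (by linarith)
        have h5 : 2*C ≤ (L:ℝ)/100 := by linarith
        calc ∑ l ∈ Finset.Icc 1 L,
            (-Real.log (Int.fract ((l : ℝ) * x)) - Real.log (Int.fract (-((l : ℝ) * x))))
            ≤ (L:ℝ) * (2*Real.log 2 + 12*(1/6 + Real.log (11/12)) + (G (1/2) - G (1/12)))
              + ((L:ℝ)/(rec x (J+1)) + 2) * Real.log (dd x (J+1))⁻¹ := hmb
          _ ≤ (L:ℝ) * 3.95 + ((b + 1/100) * (L:ℝ) + (L:ℝ)/100 + 2*(b+1/100)*(L:ℝ) + (L:ℝ)/100) := by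
              have hmain : (L:ℝ) * (2*Real.log 2 + 12*(1/6 + Real.log (11/12)) + (G (1/2) - G (1/12)))
                  ≤ (L:ℝ) * 3.95 := mul_le_mul_of_nonneg_left hK0 (le_of_lt hL0')
              linarith
          _ ≤ (L:ℝ) * (4 + 3*b) := by nlinarith
      apply ENNReal.ofReal_le_ofReal
      rw [one_div]
      calc (L:ℝ)⁻¹ * ∑ l ∈ Finset.Icc 1 L,
          (-Real.log (Int.fract ((l : ℝ) * x)) - Real.log (Int.fract (-((l : ℝ) * x))))
          ≤ (L:ℝ)⁻¹ * ((L:ℝ) * (4 + 3*b)) := by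
            apply mul_le_mul_of_nonneg_left hsum (by positivity)
        _ = ((L:ℝ)⁻¹ * (L:ℝ)) * (4 + 3*b) := by ring
        _ = 4 + 3*b := by rw [inv_mul_cancel₀ (ne_of_gt hL0'), one_mul]
    have hlimsup : Csup x ≤ ENNReal.ofReal (4 + 3*b) := by
      rw [Csup]
      exact Filter.limsup_le_of_le (by isBoundedDefault) hevL
    refine le_trans hlimsup ?_
    have h1 : ENNReal.ofReal (4 + 3*b) ≤ ENNReal.ofReal (4 + 4*b) :=
      ENNReal.ofReal_le_ofReal (by linarith)
    refine le_trans h1 ?_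
    rw [ENNReal.ofReal_add (by norm_num) (by positivity), ENNReal.ofReal_mul (by norm_num)]
    rw [hBb]
    simp [ENNReal.ofReal_ofNat]

end S11

/-- For irrational `x`, `C_sup(x) ≤ 4 + 4 B_sup(x)`; in particular `C_sup(x)` is finite
whenever `B_sup(x)` is. -/
theorem stmt11 (x : ℝ) (hx : Irrational x) : Csup x ≤ 4 + 4 * Bsup x :=
  S11.key x hx
end

section
/- Let λ be a partition (a nonincreasing sequence λ_1 ≥ λ_2 ≥ ... of nonnegative integers with finite sum |λ|), with conjugate partition λ'. For a box (i,j) of λ (meaning 1 ≤ j ≤ λ_i), define σ_{ij} = λ'_j − i + λ_i − j. Then for any integer s, the number of boxes (i,j) ∈ λ with σ_{ij} = s is at most √(2|λ|). -/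
noncomputable def conjP (lam : ℕ → ℕ) (j : ℕ) : ℕ := Set.ncard {i : ℕ | j < lam i}

noncomputable def sigF (lam : ℕ → ℕ) (p : ℕ × ℕ) : ℤ :=
  (conjP lam p.2 : ℤ) - (p.1 + 1) + (lam p.1 : ℤ) - (p.2 + 1)

/-- For a partition `λ` (given as an antitone, finitely supported function; rows and columns
are 0-indexed, so the box `(i,j)` here is the box `(i+1,j+1)` of the paper), and for
`σ_{ij} = λ'_j - i + λ_i - j` (in 1-indexed notation), the number of boxes of `λ` with
`σ_{ij} = s` is at most `√(2|λ|)` for any integer `s`. -/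
theorem stmt12 (lam : ℕ → ℕ) (hanti : Antitone lam)
    (N : ℕ) (hN : ∀ n, N ≤ n → lam n = 0) (s : ℤ) :
    (Set.ncard {p : ℕ × ℕ | p.2 < lam p.1 ∧
        (conjP lam p.2 : ℤ) - (p.1 + 1) + (lam p.1 : ℤ) - (p.2 + 1) = s} : ℝ)
      ≤ Real.sqrt (2 * ∑ i ∈ Finset.range N, (lam i : ℝ)) := by
  classical
  have hlt_N : ∀ i, 0 < lam i → i < N := by
    intro i h
    by_contra hc
    push_neg at hc
    simp [hN i hc] at h
  have hconjAnti : ∀ j j' : ℕ, j ≤ j' → conjP lam j' ≤ conjP lam j := by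
    intro j j' h
    apply Set.ncard_le_ncard
    · intro i hi; exact lt_of_le_of_lt h hi
    · apply Set.Finite.subset (Finset.range N).finite_toSet
      intro i hi
      simp only [Finset.coe_range, Set.mem_Iio]
      exact hlt_N i (Nat.lt_of_le_of_lt (Nat.zero_le j) hi)
  have hrow_le : ∀ i i' j : ℕ, i ≤ i' → sigF lam (i', j) ≤ sigF lam (i, j) := by
    intro i i' j h
    have h1 : lam i' ≤ lam i := hanti h
    simp only [sigF]
    omega
  have hrow : ∀ i i' j : ℕ, i < i' → sigF lam (i', j) < sigF lam (i, j) := by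
    intro i i' j h
    have h1 : lam i' ≤ lam i := hanti h.le
    simp only [sigF]
    omega
  have hcol : ∀ i j j' : ℕ, j < j' → sigF lam (i, j') < sigF lam (i, j) := by
    intro i j j' h
    have h1 : conjP lam j' ≤ conjP lam j := hconjAnti j j' h.le
    simp only [sigF]
    omega
  set B : Finset (ℕ × ℕ) :=
    (Finset.range N ×ˢ Finset.range (lam 0)).filter
      (fun p => p.2 < lam p.1 ∧ sigF lam p = s) with hB
  have hmemB : ∀ p : ℕ × ℕ, p ∈ B ↔ (p.2 < lam p.1 ∧ sigF lam p = s) := by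
    intro p
    simp only [hB, Finset.mem_filter, Finset.mem_product, Finset.mem_range]
    constructor
    · rintro ⟨-, h⟩; exact h
    · intro h
      refine ⟨⟨hlt_N _ (Nat.lt_of_le_of_lt (Nat.zero_le _) h.1), ?_⟩, h⟩
      exact lt_of_lt_of_le h.1 (hanti (Nat.zero_le _))
  have hsetB : {p : ℕ × ℕ | p.2 < lam p.1 ∧
      (conjP lam p.2 : ℤ) - (p.1 + 1) + (lam p.1 : ℤ) - (p.2 + 1) = s} = ↑B := by
    ext p
    simp only [Set.mem_setOf_eq, Finset.coe_filter, hmemB, Finset.mem_coe]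
    rfl
  -- the rows determine the box in B
  have hsamerow : ∀ p q : ℕ × ℕ, p ∈ B → q ∈ B → p.1 = q.1 → p = q := by
    rintro ⟨a, b⟩ ⟨c, d⟩ hp hq h
    have hps := ((hmemB (a, b)).1 hp).2
    have hqs := ((hmemB (c, d)).1 hq).2
    simp only at h
    subst h
    rcases lt_trichotomy b d with h2 | h2 | h2
    · have := hcol a b d h2; omega
    · exact Prod.ext rfl h2
    · have := hcol a d b h2; omega
  have hsamecol : ∀ p q : ℕ × ℕ, p ∈ B → q ∈ B → p.2 = q.2 → p = q := by
    rintro ⟨a, b⟩ ⟨c, d⟩ hp hq h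
    have hps := ((hmemB (a, b)).1 hp).2
    have hqs := ((hmemB (c, d)).1 hq).2
    simp only at h
    subst h
    rcases lt_trichotomy a c with h2 | h2 | h2
    · have := hrow a c b h2; omega
    · exact Prod.ext h2 rfl
    · have := hrow c a b h2; omega
  -- order reversal
  have hC : ∀ p q : ℕ × ℕ, p ∈ B → q ∈ B → p.1 ≤ q.1 → q.2 ≤ p.2 := by
    rintro ⟨a, b⟩ ⟨c, d⟩ hp hq h
    by_contra hc
    push_neg at hc
    simp only at h hc ⊢
    have h1 : sigF lam (c, d) ≤ sigF lam (a, d) := hrow_le a c d h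
    have h2 : sigF lam (a, d) < sigF lam (a, b) := hcol a b d hc
    have hps := ((hmemB (a, b)).1 hp).2
    have hqs := ((hmemB (c, d)).1 hq).2
    omega
  -- boxes of the partition
  set L : Finset (ℕ × ℕ) :=
    (Finset.range N ×ˢ Finset.range (lam 0)).filter (fun p => p.2 < lam p.1) with hL
  have hLcard : L.card ≤ ∑ i ∈ Finset.range N, lam i := by
    rw [Finset.card_eq_sum_card_fiberwise
      (f := Prod.fst) (t := Finset.range N)
      (fun x hx => (Finset.mem_product.1 (Finset.mem_filter.1 hx).1).1)]
    apply Finset.sum_le_sum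
    intro i _
    have hsub : L.filter (fun p => p.1 = i) ⊆ ({i} : Finset ℕ) ×ˢ Finset.range (lam i) := by
      intro p hp
      simp only [Finset.mem_filter, hL] at hp
      simp only [Finset.mem_product, Finset.mem_singleton, Finset.mem_range]
      exact ⟨hp.2, hp.2 ▸ hp.1.2⟩
    calc (L.filter (fun p => p.1 = i)).card ≤ (({i} : Finset ℕ) ×ˢ Finset.range (lam i)).card :=
          Finset.card_le_card hsub
      _ = lam i := by simp
  -- the injection from ordered pairs into boxes
  set T : Finset ((ℕ × ℕ) × (ℕ × ℕ)) :=
    (B ×ˢ B).filter (fun pp => pp.1.1 ≤ pp.2.1) with hT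
  have hTL : T.card ≤ L.card := by
    apply Finset.card_le_card_of_injOn (fun pp => (pp.1.1, pp.2.2))
    · intro pp hpp
      simp only [hT, Finset.mem_coe, Finset.mem_filter, Finset.mem_product] at hpp
      obtain ⟨⟨h1, h2⟩, h3⟩ := hpp
      have h4 := hC pp.1 pp.2 h1 h2 h3
      have h5 := ((hmemB pp.1).1 h1).1
      have h6 := (hmemB pp.1).1 h1
      simp only [hL, Finset.mem_coe, Finset.mem_filter, Finset.mem_product, Finset.mem_range]
      refine ⟨⟨hlt_N _ (Nat.lt_of_le_of_lt (Nat.zero_le _) h5), ?_⟩, ?_⟩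
      · exact lt_of_le_of_lt h4 (lt_of_lt_of_le h5 (hanti (Nat.zero_le _)))
      · exact lt_of_le_of_lt h4 h5
    · intro a ha b hb hab
      simp only [hT, Finset.coe_filter, Set.mem_setOf_eq, Finset.mem_product] at ha hb
      simp only [Prod.mk.injEq] at hab
      have e1 : a.1 = b.1 := hsamerow a.1 b.1 ha.1.1 hb.1.1 hab.1
      have e2 : a.2 = b.2 := hsamecol a.2 b.2 ha.1.2 hb.1.2 hab.2
      exact Prod.ext e1 e2
  -- covering of B × B by T and its swap
  have hcover : B ×ˢ B ⊆ T ∪ T.image Prod.swap := by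
    intro pp hpp
    have hpp' := Finset.mem_product.1 hpp
    rcases le_total pp.1.1 pp.2.1 with h | h
    · exact Finset.mem_union_left _ (Finset.mem_filter.2 ⟨hpp, h⟩)
    · apply Finset.mem_union_right
      apply Finset.mem_image.2
      refine ⟨(pp.2, pp.1), Finset.mem_filter.2 ⟨Finset.mem_product.2 ⟨hpp'.2, hpp'.1⟩, h⟩, rfl⟩
  have hsq : B.card * B.card ≤ 2 * (∑ i ∈ Finset.range N, lam i) := by
    have h1 : B.card * B.card = (B ×ˢ B).card := (Finset.card_product B B).symm
    have h2 : (B ×ˢ B).card ≤ (T ∪ T.image Prod.swap).card := Finset.card_le_card hcover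
    have h3 : (T ∪ T.image Prod.swap).card ≤ T.card + (T.image Prod.swap).card :=
      Finset.card_union_le _ _
    have h4 : (T.image Prod.swap).card ≤ T.card := Finset.card_image_le
    omega
  -- finish
  rw [hsetB, Set.ncard_coe_finset]
  rw [show (2 : ℝ) * ∑ i ∈ Finset.range N, (lam i : ℝ)
      = ((2 * ∑ i ∈ Finset.range N, lam i : ℕ) : ℝ) by push_cast; ring]
  rw [Real.le_sqrt (Nat.cast_nonneg _) (Nat.cast_nonneg _)]
  have : ((B.card * B.card : ℕ) : ℝ) ≤ ((2 * ∑ i ∈ Finset.range N, lam i : ℕ) : ℝ) := by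
    exact_mod_cast hsq
  calc (B.card : ℝ) ^ 2 = ((B.card * B.card : ℕ) : ℝ) := by push_cast; ring
    _ ≤ _ := this
end

section
/- Let ε_1, ε_2 be nonzero complex numbers with b² = ε_1/ε_2 ∉ ℝ. Define D = |ε_2 · Im(b²)/(1 + b²)| (which is positive). Let λ, μ be partitions, (i,j) a box of λ, and set σ = μ'_j − i + λ_i − j. Then |−ε_1(μ'_j − i) + ε_2(λ_i − j)| ≥ D·|σ|. -/
/-- Let `ε₁, ε₂ ≠ 0` with `b² = ε₁/ε₂ ∉ ℝ`, and let `D = |ε₂ Im(b²)/(1+b²)|`.  For a box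
`(i,j)` of `λ` (0-indexed here; the paper's box is `(i+1,j+1)`) and
`σ = μ'_j - i + λ_i - j` (1-indexed notation), one has `D > 0` and
`|-ε₁(μ'_j - i) + ε₂(λ_i - j)| ≥ D |σ|`. -/
theorem stmt17 (ε₁ ε₂ : ℂ) (h1 : ε₁ ≠ 0) (h2 : ε₂ ≠ 0)
    (hb : ∀ r : ℝ, ε₁ / ε₂ ≠ (r : ℂ))
    (lam mu : ℕ → ℕ) (hlam : Antitone lam) (hmu : Antitone mu)
    (M : ℕ) (hM : ∀ n, M ≤ n → mu n = 0)
    (i j : ℕ) (hbox : j < lam i) :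
    0 < ‖ε₂ * (((ε₁ / ε₂).im : ℂ)) / (1 + ε₁ / ε₂)‖ ∧
    ‖ε₂ * (((ε₁ / ε₂).im : ℂ)) / (1 + ε₁ / ε₂)‖ *
        |((conjP mu j : ℝ) - (i + 1) + (lam i : ℝ) - (j + 1))|
      ≤ ‖-ε₁ * (((conjP mu j : ℤ) - (i + 1) : ℤ) : ℂ) +
          ε₂ * (((lam i : ℤ) - (j + 1) : ℤ) : ℂ)‖ := by
  set c : ℂ := ε₁ / ε₂ with hc
  have hcim : c.im ≠ 0 := by
    intro h
    exact hb c.re (by apply Complex.ext <;> simp [h])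
  have h1c : (1 : ℂ) + c ≠ 0 := by
    intro h
    have hcn : c = -1 := by linear_combination h
    rw [hcn] at hcim; simp at hcim
  have hs : ε₁ + ε₂ = ε₂ * (1 + c) := by
    field_simp [hc]
    rw [hc]; linear_combination (-1 : ℂ) * (div_mul_cancel₀ ε₁ h2)
  have hsne : ε₁ + ε₂ ≠ 0 := by rw [hs]; exact mul_ne_zero h2 h1c
  set m : ℝ := (conjP mu j : ℝ) - (i + 1) with hm
  set n : ℝ := (lam i : ℝ) - (j + 1) with hn
  -- the quantity w = σ ε₂ / (ε₁ + ε₂)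
  set w : ℂ := ((m + n : ℝ) : ℂ) * (ε₂ / (ε₁ + ε₂)) with hw
  have key : (-ε₁ * (m : ℂ) + ε₂ * (n : ℂ)) = (ε₁ + ε₂) * (w - (m : ℂ)) := by
    rw [hw]
    field_simp
    push_cast
    ring
  have him : w.im = (m + n) * (ε₂ / (ε₁ + ε₂)).im := by
    rw [hw, Complex.mul_im]
    simp
  have hfrac : ε₂ / (ε₁ + ε₂) = 1 / (1 + c) := by
    rw [hs]
    field_simp
  have hfim : |(ε₂ / (ε₁ + ε₂)).im| = |c.im| / ‖1 + c‖ ^ 2 := by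
    have hns : |Complex.normSq (1 + c)| = ‖1 + c‖ ^ 2 := by
      rw [abs_of_nonneg (Complex.normSq_nonneg _), Complex.sq_norm]
    rw [hfrac, one_div, Complex.inv_im, abs_div, abs_neg, hns]
    simp
  have habs1c : ‖1 + c‖ ≠ 0 := norm_ne_zero_iff.mpr h1c
  have hD : ‖ε₂ * ((c.im : ℝ) : ℂ) / (1 + c)‖
      = ‖ε₁ + ε₂‖ * |(ε₂ / (ε₁ + ε₂)).im| := by
    rw [hfim, hs, norm_div, norm_mul, norm_mul, Complex.norm_real, Real.norm_eq_abs]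
    field_simp
  constructor
  · apply norm_pos_iff.mpr
    apply div_ne_zero _ h1c
    apply mul_ne_zero h2
    simpa using hcim
  · have hcast : (-ε₁ * (((conjP mu j : ℤ) - (i + 1) : ℤ) : ℂ) +
        ε₂ * (((lam i : ℤ) - (j + 1) : ℤ) : ℂ)) = -ε₁ * (m : ℂ) + ε₂ * (n : ℂ) := by
      rw [hm, hn]; push_cast; ring
    have hσ : ((conjP mu j : ℝ) - (i + 1) + (lam i : ℝ) - (j + 1)) = m + n := by
      rw [hm, hn]; ring
    rw [hcast, hσ, key, norm_mul, hD, mul_assoc]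
    apply mul_le_mul_of_nonneg_left _ (norm_nonneg _)
    calc |(ε₂ / (ε₁ + ε₂)).im| * |m + n| = |w.im| := by rw [him, abs_mul]; ring
      _ = |(w - (m : ℂ)).im| := by simp
      _ ≤ ‖w - (m : ℂ)‖ := Complex.abs_im_le_norm _
end

section
/- Let b² < 0 be a negative real number and λ, μ partitions. For a box (i,j) ∈ λ, define τ_{ij} = ⌊((−b²)(μ'_j − i) + (λ_i − j))/min(1, −b²)⌋. Then τ is strictly decreasing in i and in j (whenever the corresponding boxes lie in λ), and consequently for any integer s, the number of boxes (i,j) ∈ λ with τ_{ij} = s is at most √(2|λ|). -/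
/-- `τ_{ij} = ⌊((-b²)(μ'_j - i) + (λ_i - j)) / min(1, -b²)⌋` in 1-indexed notation, written
for 0-indexed `(i,j)`. -/
noncomputable def tauB (b2 : ℝ) (lam mu : ℕ → ℕ) (i j : ℕ) : ℤ :=
  ⌊((-b2) * ((conjP mu j : ℝ) - (i + 1)) + ((lam i : ℝ) - (j + 1))) / min 1 (-b2)⌋

private lemma floor_div_lt {m x y : ℝ} (hm : 0 < m) (h : x + m ≤ y) :
    ⌊x / m⌋ < ⌊y / m⌋ := by
  have h2 : (x + m) / m ≤ y / m := by gcongr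
  have h3 : x / m + 1 = (x + m) / m := by field_simp
  have h4 : ⌊x / m + 1⌋ ≤ ⌊y / m⌋ := Int.floor_le_floor (by linarith)
  rw [Int.floor_add_one] at h4
  omega

private lemma sum_range_card_le (t : Finset ℕ) :
    ∑ i ∈ Finset.range t.card, i ≤ ∑ i ∈ t, i := by
  induction t using Finset.strongInduction with
  | _ t ih =>
    rcases t.eq_empty_or_nonempty with rfl | ht
    · simp
    · set m := t.max' ht with hmdef
      have hm := t.max'_mem ht
      have hsub : t.erase m ⊂ t := Finset.erase_ssubset hm
      have h1 := ih _ hsub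
      have hcard : (t.erase m).card = t.card - 1 := Finset.card_erase_of_mem hm
      have hpos : 0 < t.card := Finset.card_pos.mpr ht
      have hle : t.card - 1 ≤ m := by
        have : t ⊆ Finset.range (m + 1) := by
          intro x hx
          simp only [Finset.mem_range]
          exact Nat.lt_succ_of_le (Finset.le_max' t x hx)
        have := Finset.card_le_card this
        simp at this; omega
      have hsplit : ∑ i ∈ t, i = (∑ i ∈ t.erase m, i) + m :=
        (Finset.sum_erase_add t _ hm).symm
      have : t.card = (t.card - 1) + 1 := by omega
      rw [this, Finset.sum_range_succ, hsplit]
      rw [hcard] at h1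
      omega

/-- For `b² < 0` and partitions `λ, μ`, the quantity `τ_{ij}` is strictly decreasing in `i`
and in `j` among boxes of `λ`; consequently, for any integer `s`, the number of boxes of
`λ` with `τ_{ij} = s` is at most `√(2|λ|)`. -/
theorem stmt18 (b2 : ℝ) (hb : b2 < 0)
    (lam mu : ℕ → ℕ) (hlam : Antitone lam) (hmu : Antitone mu)
    (N : ℕ) (hN : ∀ n, N ≤ n → lam n = 0)
    (M : ℕ) (hM : ∀ n, M ≤ n → mu n = 0) :
    (∀ i j : ℕ, j < lam i → j < lam (i + 1) →
      tauB b2 lam mu (i + 1) j < tauB b2 lam mu i j) ∧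
    (∀ i j : ℕ, j + 1 < lam i →
      tauB b2 lam mu i (j + 1) < tauB b2 lam mu i j) ∧
    (∀ s : ℤ, (Set.ncard {p : ℕ × ℕ | p.2 < lam p.1 ∧ tauB b2 lam mu p.1 p.2 = s} : ℝ)
      ≤ Real.sqrt (2 * ∑ i ∈ Finset.range N, (lam i : ℝ))) := by
  have hm : (0 : ℝ) < min 1 (-b2) := lt_min one_pos (by linarith)
  have hm1 : min 1 (-b2) ≤ 1 := min_le_left _ _
  have hm2 : min 1 (-b2) ≤ -b2 := min_le_right _ _
  -- conjP is antitone
  have hconj : ∀ j j' : ℕ, j ≤ j' → conjP mu j' ≤ conjP mu j := by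
    intro j j' hjj
    apply Set.ncard_le_ncard
    · intro i hi; exact lt_of_le_of_lt hjj hi
    · apply Set.Finite.subset (Set.finite_Iio M)
      intro i hi
      simp only [Set.mem_setOf_eq] at hi
      simp only [Set.mem_Iio]
      by_contra hc
      push_neg at hc
      rw [hM i hc] at hi; omega
  -- part 1
  have part1 : ∀ i j : ℕ, j < lam i → j < lam (i + 1) →
      tauB b2 lam mu (i + 1) j < tauB b2 lam mu i j := by
    intro i j _ _
    unfold tauB
    apply floor_div_lt hm
    have hl : (lam (i + 1) : ℝ) ≤ lam i := by
      exact_mod_cast hlam (Nat.le_succ i)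
    push_cast
    nlinarith [hl]
  -- part 2
  have part2 : ∀ i j : ℕ, j + 1 < lam i →
      tauB b2 lam mu i (j + 1) < tauB b2 lam mu i j := by
    intro i j _
    unfold tauB
    apply floor_div_lt hm
    have hc : (conjP mu (j + 1) : ℝ) ≤ conjP mu j := by
      exact_mod_cast hconj j (j + 1) (Nat.le_succ j)
    have hp : 0 ≤ (-b2) * ((conjP mu j : ℝ) - conjP mu (j + 1)) :=
      mul_nonneg (by linarith) (by linarith)
    push_cast
    nlinarith [hp]
  refine ⟨part1, part2, ?_⟩
  -- chains
  have chain1 : ∀ (d i j : ℕ), j < lam (i + d + 1) →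
      tauB b2 lam mu (i + d + 1) j < tauB b2 lam mu i j := by
    intro d
    induction d with
    | zero => intro i j h; exact part1 i j (lt_of_lt_of_le h (hlam (Nat.le_succ i))) h
    | succ d ih =>
      intro i j h
      have h' : j < lam (i + d + 1) := lt_of_lt_of_le h (hlam (by omega))
      have he : i + (d + 1) + 1 = (i + d + 1) + 1 := by omega
      rw [he] at h ⊢
      exact lt_trans (part1 (i + d + 1) j h' h) (ih i j h')
  have chain2 : ∀ (d i j : ℕ), j + d + 1 < lam i →
      tauB b2 lam mu i (j + d + 1) < tauB b2 lam mu i j := by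
    intro d
    induction d with
    | zero => intro i j h; exact part2 i j (by omega)
    | succ d ih =>
      intro i j h
      have h' : j + d + 1 < lam i := by omega
      have he : j + (d + 1) + 1 = (j + d + 1) + 1 := by omega
      rw [he] at h ⊢
      exact lt_trans (part2 i (j + d + 1) h) (ih i j h')
  -- general strict antitonicity
  have row_ne : ∀ i j j', j < j' → j' < lam i →
      tauB b2 lam mu i j' < tauB b2 lam mu i j := by
    intro i j j' hjj h
    obtain ⟨d, rfl⟩ : ∃ d, j' = j + d + 1 := ⟨j' - j - 1, by omega⟩
    exact chain2 d i j h
  have col_ne : ∀ i i' j, i < i' → j < lam i' →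
      tauB b2 lam mu i' j < tauB b2 lam mu i j := by
    intro i i' j hii h
    obtain ⟨d, rfl⟩ : ∃ d, i' = i + d + 1 := ⟨i' - i - 1, by omega⟩
    exact chain1 d i j h
  intro s
  set S := {p : ℕ × ℕ | p.2 < lam p.1 ∧ tauB b2 lam mu p.1 p.2 = s} with hS
  have hmem : ∀ p ∈ S, p.1 < N ∧ p.2 < lam 0 := by
    intro p hp
    obtain ⟨h1, _⟩ := hp
    constructor
    · by_contra hc; push_neg at hc; rw [hN p.1 hc] at h1; omega
    · exact lt_of_lt_of_le h1 (hlam (Nat.zero_le _))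
  have hfin : S.Finite := by
    apply Set.Finite.subset ((Set.finite_Iio N).prod (Set.finite_Iio (lam 0)))
    intro p hp
    exact ⟨(hmem p hp).1, (hmem p hp).2⟩
  set F := hfin.toFinset with hF
  have hFmem : ∀ p, p ∈ F ↔ p ∈ S := fun p => hfin.mem_toFinset
  have hcard : S.ncard = F.card := Set.ncard_eq_toFinset_card S hfin
  set q := F.card with hq
  -- injectivity of fst and snd
  have hfst : Set.InjOn Prod.fst (F : Set (ℕ × ℕ)) := by
    intro p hp p' hp' h
    rw [Finset.mem_coe, hFmem] at hp hp'
    have e' : tauB b2 lam mu p.1 p'.2 = s := by rw [h]; exact hp'.2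
    have hl' : p'.2 < lam p.1 := by rw [h]; exact hp'.1
    ext
    · exact h
    · by_contra hne
      rcases Nat.lt_or_ge p.2 p'.2 with hlt | hge
      · have := row_ne p.1 p.2 p'.2 hlt hl'
        rw [hp.2, e'] at this; omega
      · have hlt' : p'.2 < p.2 := by omega
        have := row_ne p.1 p'.2 p.2 hlt' hp.1
        rw [hp.2, e'] at this; omega
  have hsnd : Set.InjOn Prod.snd (F : Set (ℕ × ℕ)) := by
    intro p hp p' hp' h
    rw [Finset.mem_coe, hFmem] at hp hp'
    have e' : tauB b2 lam mu p'.1 p.2 = s := by rw [h]; exact hp'.2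
    have hl' : p.2 < lam p'.1 := by rw [h]; exact hp'.1
    ext
    · by_contra hne
      rcases Nat.lt_or_ge p.1 p'.1 with hlt | hge
      · have := col_ne p.1 p'.1 p.2 hlt hl'
        rw [hp.2, e'] at this; omega
      · have hlt' : p'.1 < p.1 := by omega
        have := col_ne p'.1 p.1 p.2 hlt' hp.1
        rw [hp.2, e'] at this; omega
    · exact h
  -- counting
  have key : q + ∑ i ∈ Finset.range q, i ≤ ∑ i ∈ Finset.range N, lam i := by
    have s1 : ∑ p ∈ F, lam p.1 ≤ ∑ i ∈ Finset.range N, lam i := by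
      have e : ∑ i ∈ F.image Prod.fst, lam i = ∑ p ∈ F, lam p.1 :=
        Finset.sum_image (fun x hx y hy h => hfst (Finset.mem_coe.mpr hx) (Finset.mem_coe.mpr hy) h)
      rw [← e]
      apply Finset.sum_le_sum_of_subset
      intro i hi
      simp only [Finset.mem_image] at hi
      obtain ⟨p, hp, rfl⟩ := hi
      exact Finset.mem_range.mpr (hmem p ((hFmem p).mp hp)).1
    have s2 : ∑ p ∈ F, (p.2 + 1) ≤ ∑ p ∈ F, lam p.1 := by
      apply Finset.sum_le_sum
      intro p hp
      exact ((hFmem p).mp hp).1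
    have s3 : ∑ p ∈ F, (p.2 + 1) = (∑ p ∈ F, p.2) + q := by
      rw [Finset.sum_add_distrib]; simp [hq]
    have s4 : ∑ i ∈ Finset.range q, i ≤ ∑ p ∈ F, p.2 := by
      have e : ∑ i ∈ F.image Prod.snd, i = ∑ p ∈ F, p.2 :=
        Finset.sum_image (fun x hx y hy h => hsnd (Finset.mem_coe.mpr hx) (Finset.mem_coe.mpr hy) h)
      have hc : (F.image Prod.snd).card = q := Finset.card_image_of_injOn hsnd
      calc ∑ i ∈ Finset.range q, i = ∑ i ∈ Finset.range (F.image Prod.snd).card, i := by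
            rw [hc]
        _ ≤ ∑ i ∈ F.image Prod.snd, i := sum_range_card_le _
        _ = ∑ p ∈ F, p.2 := e
    omega
  rw [hcard]
  apply Real.le_sqrt_of_sq_le
  have hT : (∑ i ∈ Finset.range N, (lam i : ℝ)) = ((∑ i ∈ Finset.range N, lam i : ℕ) : ℝ) := by
    push_cast; ring
  rw [hT]
  have h2 : 2 * q + (∑ i ∈ Finset.range q, i) * 2 ≤ 2 * ∑ i ∈ Finset.range N, lam i := by
    omega
  rw [Finset.sum_range_id_mul_two] at h2
  rcases Nat.eq_zero_or_pos q with hq0 | hqpos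
  · rw [hq0]; simp; positivity
  · have h3 : 2 * (q:ℝ) + (q:ℝ) * ((q:ℝ) - 1) ≤ 2 * ((∑ i ∈ Finset.range N, lam i : ℕ) : ℝ) := by
      have hc := (Nat.cast_le (α := ℝ)).mpr h2
      push_cast [Nat.cast_sub hqpos] at hc
      convert hc using 2
      push_cast
      all_goals (push_cast; rfl)
    have hq1 : (1:ℝ) ≤ (q:ℝ) := by exact_mod_cast hqpos
    nlinarith [h3, hq1]
end
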